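/- arXiv:2509.14467 — 5 statements merged into one kernel-verified Lean document; each statement's English description precedes it below -/
import Mathlib

section
/- The q-s Catalan numbers satisfy the recurrence G_N(q,s) = ∑_{k=0}^{N-1} s · q^{N-k-1} · G_k(q,s) · G_{N-k-1}(q,1) for all N ≥ 1, with G_0(q,s) = 1. -/
open Finset

/-- Height of a ±1 path after `k` steps (`true` = up-step, `false` = down-step). -/
def dheight (w : List Bool) (k : ℕ) : ℤ :=
  ((w.take k).map (fun b => if b then (1 : ℤ) else -1)).sum

/-- A Dyck path: heights stay nonnegative and the path ends at height 0. -/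
def IsDyck (w : List Bool) : Prop :=
  (∀ k ∈ Finset.range (w.length + 1), 0 ≤ dheight w k) ∧ dheight w w.length = 0

/-- The area (number of full lattice squares) under a Dyck path:
`a(w) = (∑_{k=1}^{2N} h_k - N) / 2`. -/
def darea (w : List Bool) : ℤ :=
  ((∑ k ∈ Finset.range w.length, dheight w (k + 1)) - (w.length : ℤ) / 2) / 2

/-- Number of returns of the path to height zero (endpoint counted, start not). -/
def dreturns (w : List Bool) : ℕ :=
  ((Finset.Icc 1 w.length).filter (fun k => dheight w k = 0)).card

-- The q-s Catalan number `G_N(q,s) = ∑_{w ∈ D_N} q^{a(w)} s^{m(w)}`.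
open scoped Classical in
noncomputable def Gqs (N : ℕ) (q s : ℝ) : ℝ :=
  ∑ f : Fin (2 * N) → Bool,
    if IsDyck (List.ofFn f)
    then q ^ (darea (List.ofFn f)).toNat * s ^ dreturns (List.ofFn f)
    else 0

/-! ### Auxiliary lemmas about heights -/

lemma dheight_zero (w : List Bool) : dheight w 0 = 0 := rfl

lemma dheight_nil (k : ℕ) : dheight [] k = 0 := by simp [dheight]

lemma dheight_cons (b : Bool) (w : List Bool) (k : ℕ) :
    dheight (b :: w) (k + 1) = (if b then (1 : ℤ) else -1) + dheight w k := by
  simp [dheight]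

lemma dheight_append (a b : List Bool) (k : ℕ) :
    dheight (a ++ b) k = dheight a k + dheight b (k - a.length) := by
  simp [dheight, List.take_append]

lemma dheight_of_le (w : List Bool) {k : ℕ} (h : w.length ≤ k) :
    dheight w k = dheight w w.length := by
  simp [dheight, List.take_of_length_le h, List.take_of_length_le (le_refl w.length)]

lemma dheight_succ (w : List Bool) {k : ℕ} (h : k < w.length) :
    dheight w (k + 1) = dheight w k + (if w[k] then 1 else -1) := by
  rw [dheight, dheight, List.take_succ, List.getElem?_eq_getElem h, List.map_append,
    List.sum_append]
  simp

lemma dheight_parity (w : List Bool) : ∀ k, k ≤ w.length → Even (dheight w k + k) := by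
  intro k
  induction k with
  | zero => intro _; simp [dheight_zero]
  | succ k ih =>
    intro hk
    have hk' : k < w.length := by omega
    obtain ⟨c, hc⟩ := ih (by omega)
    rw [dheight_succ w hk']
    by_cases hb : w[k] = true
    · refine ⟨c + 1, ?_⟩
      rw [if_pos hb]
      push_cast
      push_cast at hc
      linarith
    · refine ⟨c, ?_⟩
      rw [if_neg hb]
      push_cast
      push_cast at hc
      linarith

/-- The sum of the heights. -/
noncomputable def Sh (w : List Bool) : ℤ := ∑ k ∈ Finset.range w.length, dheight w (k + 1)

lemma sum_range_add' {M : Type*} [AddCommMonoid M] (f : ℕ → M) (m n : ℕ) :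
    ∑ k ∈ range (m + n), f k = (∑ k ∈ range m, f k) + ∑ i ∈ range n, f (m + i) := by
  induction n with
  | zero => simp
  | succ n ih =>
    rw [show m + (n + 1) = (m + n) + 1 from rfl, Finset.sum_range_succ, Finset.sum_range_succ,
      ih, add_assoc]

lemma sum_range_cast (n : ℕ) : 2 * (∑ k ∈ range n, ((k : ℤ) + 1)) = n * (n + 1) := by
  induction n with
  | zero => simp
  | succ n ih =>
    rw [Finset.sum_range_succ]
    push_cast
    push_cast at ih
    linear_combination ih

lemma even_Sh (w : List Bool) (a : ℕ) (hl : w.length = 2 * a) :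
    Even (Sh w - a) := by
  have h1 : Even (Sh w + ∑ k ∈ range w.length, ((k : ℤ) + 1)) := by
    rw [Sh, ← Finset.sum_add_distrib]
    apply Finset.even_sum
    intro k hk
    rw [Finset.mem_range] at hk
    have h := dheight_parity w (k + 1) (by omega)
    have hcast : ((k + 1 : ℕ) : ℤ) = (k : ℤ) + 1 := by push_cast; ring
    rwa [hcast] at h
  obtain ⟨c, hc⟩ := h1
  have h2 := sum_range_cast w.length
  rw [hl] at hc h2
  push_cast at h2
  refine ⟨c - a * a - a, ?_⟩
  push_cast
  nlinarith [hc, h2]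

lemma indicSum (a : ℕ) : ∑ k ∈ range (2 * a), (if Even k then (1 : ℤ) else 0) = a := by
  induction a with
  | zero => simp
  | succ a ih =>
    rw [show 2 * (a + 1) = (2 * a + 1) + 1 from by ring, Finset.sum_range_succ,
      Finset.sum_range_succ, ih]
    have h1 : Even (2 * a) := even_two_mul a
    have h2 : ¬ Even (2 * a + 1) := by simp [Nat.even_add_one, h1]
    rw [if_pos h1, if_neg h2]
    push_cast
    ring

lemma Sh_ge (w : List Bool) (a : ℕ) (hD : IsDyck w) (hl : w.length = 2 * a) :
    (a : ℤ) ≤ Sh w := by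
  have hle : ∑ k ∈ range (2 * a), (if Even k then (1 : ℤ) else 0)
      ≤ ∑ k ∈ range (2 * a), dheight w (k + 1) := by
    apply Finset.sum_le_sum
    intro k hk
    rw [Finset.mem_range] at hk
    have hk' : k + 1 ≤ w.length := by omega
    have h0 : 0 ≤ dheight w (k + 1) := hD.1 (k + 1) (by rw [Finset.mem_range]; omega)
    by_cases he : Even k
    · rw [if_pos he]
      obtain ⟨c, hc⟩ := dheight_parity w (k + 1) hk'
      obtain ⟨d, hd⟩ := he
      have hcast : ((k + 1 : ℕ) : ℤ) = 2 * (d : ℤ) + 1 := by push_cast; omega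
      rw [hcast] at hc
      omega
    · rw [if_neg he]; exact h0
  rw [indicSum] at hle
  have hS : Sh w = ∑ k ∈ range w.length, dheight w (k + 1) := rfl
  rw [hS, hl]
  exact hle

lemma darea_eq (w : List Bool) (a : ℕ) (hl : w.length = 2 * a) (c : ℤ)
    (hc : Sh w - a = c + c) : darea w = c := by
  show ((∑ k ∈ Finset.range w.length, dheight w (k + 1)) - (w.length : ℤ) / 2) / 2 = c
  have hS : Sh w = ∑ k ∈ range w.length, dheight w (k + 1) := rfl
  rw [← hS, hl]
  push_cast
  omega

/-! ### Heights of the composite path -/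

lemma phi_length (u v : List Bool) :
    (true :: u ++ false :: v).length = u.length + v.length + 2 := by
  simp; omega

lemma phi_height_low (u v : List Bool) {j : ℕ} (hj : j ≤ u.length) :
    dheight (true :: u ++ false :: v) (j + 1) = 1 + dheight u j := by
  rw [show (true :: u ++ false :: v) = true :: (u ++ false :: v) from rfl, dheight_cons,
    dheight_append, Nat.sub_eq_zero_of_le hj]
  simp [dheight_zero]

lemma phi_height_high (u v : List Bool) (i : ℕ) :
    dheight (true :: u ++ false :: v) (u.length + 2 + i)
      = dheight u u.length + dheight v i := by
  rw [show u.length + 2 + i = (u.length + 1 + i) + 1 from by ring,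
    show (true :: u ++ false :: v) = true :: (u ++ false :: v) from rfl, dheight_cons,
    dheight_append, dheight_of_le u (by omega),
    show u.length + 1 + i - u.length = i + 1 from by omega, dheight_cons]
  simp; ring

lemma isDyck_phi {u v : List Bool} (hu : IsDyck u) (hv : IsDyck v) :
    IsDyck (true :: u ++ false :: v) := by
  constructor
  · intro k hk
    rw [phi_length, Finset.mem_range] at hk
    rcases Nat.eq_zero_or_pos k with h0 | hpos
    · simp [h0, dheight_zero]
    rcases le_or_gt k (u.length + 1) with hlow | hhigh
    · obtain ⟨j, rfl⟩ : ∃ j, k = j + 1 := ⟨k - 1, by omega⟩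
      rw [phi_height_low u v (by omega)]
      have := hu.1 j (by rw [Finset.mem_range]; omega)
      linarith
    · obtain ⟨i, rfl⟩ : ∃ i, k = u.length + 2 + i := ⟨k - (u.length + 2), by omega⟩
      rw [phi_height_high, hu.2]
      have := hv.1 i (by rw [Finset.mem_range]; omega)
      linarith
  · rw [phi_length, show u.length + v.length + 2 = u.length + 2 + v.length from by ring,
      phi_height_high, hu.2, hv.2]
    ring

lemma sum_Icc_shift (f : ℕ → ℕ) (L : ℕ) :
    ∑ k ∈ Finset.Icc 1 L, f k = ∑ k ∈ range L, f (k + 1) := by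
  induction L with
  | zero => simp
  | succ L ih =>
    rw [Finset.sum_Icc_succ_top (by omega), ih, Finset.sum_range_succ]

lemma dreturns_eq_sum (w : List Bool) :
    dreturns w = ∑ k ∈ range w.length, (if dheight w (k + 1) = 0 then 1 else 0) := by
  rw [dreturns, Finset.card_filter, sum_Icc_shift]

lemma dreturns_phi {u v : List Bool} (hu : IsDyck u) :
    dreturns (true :: u ++ false :: v) = 1 + dreturns v := by
  rw [dreturns_eq_sum, dreturns_eq_sum, phi_length,
    show u.length + v.length + 2 = (u.length + 1) + (v.length + 1) from by ring,
    sum_range_add']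
  have hre : ∀ i, dheight (true :: u ++ false :: v) (u.length + 1 + i + 1) = dheight v i := by
    intro i
    rw [show u.length + 1 + i + 1 = u.length + 2 + i from by ring, phi_height_high, hu.2]
    ring
  have h1 : ∑ k ∈ range (u.length + 1),
      (if dheight (true :: u ++ false :: v) (k + 1) = 0 then 1 else 0) = 0 := by
    apply Finset.sum_eq_zero
    intro k hk
    rw [Finset.mem_range] at hk
    rw [phi_height_low u v (by omega)]
    have h := hu.1 k (by rw [Finset.mem_range]; omega)
    have hne : ¬ (1 + dheight u k = 0) := by omega
    simp [hne]
  have h2 : ∑ i ∈ range (v.length + 1),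
      (if dheight (true :: u ++ false :: v) (u.length + 1 + i + 1) = 0 then 1 else 0)
      = 1 + ∑ k ∈ range v.length, (if dheight v (k + 1) = 0 then 1 else 0) := by
    rw [Finset.sum_range_succ', hre 0, dheight_zero]
    simp only [hre]
    simp [add_comm]
  rw [h1, h2]
  omega

lemma Sh_phi {u v : List Bool} (hu2 : dheight u u.length = 0) :
    Sh (true :: u ++ false :: v) = Sh u + Sh v + u.length + 1 := by
  have hS : ∀ w : List Bool, Sh w = ∑ k ∈ range w.length, dheight w (k + 1) := fun _ => rfl
  rw [hS, phi_length,
    show u.length + v.length + 2 = (u.length + 1) + (v.length + 1) from by ring,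
    sum_range_add']
  have h1 : ∑ k ∈ range (u.length + 1), dheight (true :: u ++ false :: v) (k + 1)
      = (u.length + 1 : ℤ) + Sh u := by
    have hcg : ∀ k ∈ range (u.length + 1),
        dheight (true :: u ++ false :: v) (k + 1) = 1 + dheight u k := by
      intro k hk
      rw [Finset.mem_range] at hk
      exact phi_height_low u v (by omega)
    rw [Finset.sum_congr rfl hcg, Finset.sum_add_distrib]
    have hs2 : ∑ k ∈ range (u.length + 1), dheight u k = Sh u := by
      rw [Finset.sum_range_succ', dheight_zero, add_zero]
      rfl
    rw [hs2, Finset.sum_const, Finset.card_range, nsmul_eq_mul]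
    push_cast
    ring
  have h2 : ∑ i ∈ range (v.length + 1),
      dheight (true :: u ++ false :: v) (u.length + 1 + i + 1) = Sh v := by
    have hcg : ∀ i ∈ range (v.length + 1),
        dheight (true :: u ++ false :: v) (u.length + 1 + i + 1) = dheight v i := by
      intro i _
      rw [show u.length + 1 + i + 1 = u.length + 2 + i from by ring, phi_height_high, hu2]
      ring
    rw [Finset.sum_congr rfl hcg, Finset.sum_range_succ', dheight_zero, add_zero]
    rfl
  rw [h1, h2]
  ring

/-! ### Weight machinery -/

noncomputable def wt (q s : ℝ) (l : List Bool) : ℝ := q ^ (darea l).toNat * s ^ dreturns l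

def LB (n : ℕ) : Finset (List Bool) :=
  Finset.image (fun f : Fin n → Bool => List.ofFn f) Finset.univ

open scoped Classical in
noncomputable def DY (n : ℕ) : Finset (List Bool) := (LB n).filter IsDyck

lemma mem_DY {n : ℕ} {l : List Bool} : l ∈ DY n ↔ l.length = n ∧ IsDyck l := by
  classical
  simp only [DY, LB, Finset.mem_filter, Finset.mem_image, Finset.mem_univ, true_and]
  constructor
  · rintro ⟨⟨f, rfl⟩, hD⟩
    exact ⟨by simp, hD⟩
  · rintro ⟨rfl, hD⟩
    exact ⟨⟨l.get, List.ofFn_get l⟩, hD⟩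

lemma Gqs_eq (N : ℕ) (q s : ℝ) : Gqs N q s = ∑ l ∈ DY (2 * N), wt q s l := by
  classical
  rw [Gqs, DY, Finset.sum_filter, LB, Finset.sum_image
    (fun f _ g _ h => List.ofFn_injective h)]
  apply Finset.sum_congr rfl
  intro f _
  by_cases h : IsDyck (List.ofFn f) <;> simp [h, wt]

lemma wt_phi {u v : List Bool} {a b : ℕ} (hu : IsDyck u) (hv : IsDyck v)
    (hul : u.length = 2 * a) (hvl : v.length = 2 * b) (q s : ℝ) :
    wt q s (true :: u ++ false :: v) = s * q ^ a * wt q 1 u * wt q s v := by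
  obtain ⟨cu, hcu⟩ := even_Sh u a hul
  obtain ⟨cv, hcv⟩ := even_Sh v b hvl
  have hΦl : (true :: u ++ false :: v).length = 2 * (a + b + 1) := by rw [phi_length]; omega
  obtain ⟨cp, hcp⟩ := even_Sh _ (a + b + 1) hΦl
  have hdu : darea u = cu := darea_eq u a hul cu hcu
  have hdv : darea v = cv := darea_eq v b hvl cv hcv
  have hdp : darea (true :: u ++ false :: v) = cp := darea_eq _ (a + b + 1) hΦl cp hcp
  have hS : Sh (true :: u ++ false :: v) = Sh u + Sh v + u.length + 1 := Sh_phi hu.2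
  have hcu0 : 0 ≤ cu := by have := Sh_ge u a hu hul; omega
  have hcv0 : 0 ≤ cv := by have := Sh_ge v b hv hvl; omega
  have hkey : cp = cu + cv + a := by
    rw [hul] at hS
    push_cast at hcp hcu hcv hS ⊢
    omega
  have htoNat : (darea (true :: u ++ false :: v)).toNat
      = (darea u).toNat + (darea v).toNat + a := by
    rw [hdu, hdv, hdp]; omega
  rw [wt, wt, wt, htoNat, dreturns_phi hu, pow_add, pow_add, pow_add]
  simp [one_pow]
  ring

/-! ### Injectivity -/

lemma not_lt_of_append_eq {u v u' v' : List Bool} (hu : IsDyck u) (hu' : IsDyck u')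
    (h2 : u ++ false :: v = u' ++ false :: v') : ¬ u'.length < u.length := by
  intro hlt
  have h := congrArg (fun w => dheight w (u'.length + 1)) h2
  simp only [dheight_append] at h
  rw [Nat.sub_eq_zero_of_le (by omega : u'.length + 1 ≤ u.length), dheight_zero,
    dheight_of_le u' (by omega), hu'.2,
    show u'.length + 1 - u'.length = 0 + 1 from by omega, dheight_cons, dheight_zero] at h
  have hnn := hu.1 (u'.length + 1) (by rw [Finset.mem_range]; omega)
  simp at h
  omega

lemma phi_inj_aux {u v u' v' : List Bool} (hu : IsDyck u) (hu' : IsDyck u')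
    (h : true :: u ++ false :: v = true :: u' ++ false :: v') : u = u' ∧ v = v' := by
  have h2 : u ++ false :: v = u' ++ false :: v' := by
    injection h
  have hlen : u.length = u'.length := by
    have n1 := not_lt_of_append_eq hu hu' h2
    have n2 := not_lt_of_append_eq hu' hu h2.symm
    omega
  obtain ⟨he1, he2⟩ := List.append_inj h2 hlen
  refine ⟨he1, ?_⟩
  injection he2

/-! ### Decomposition (surjectivity) -/

lemma decomp {l : List Bool} {N : ℕ} (hN : 1 ≤ N) (hlen : l.length = 2 * N)
    (hD : IsDyck l) :
    ∃ k u v, k < N ∧ u.length = 2 * (N - 1 - k) ∧ v.length = 2 * k ∧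
      IsDyck u ∧ IsDyck v ∧ l = true :: u ++ false :: v := by
  classical
  have hL : 1 ≤ l.length := by omega
  have hP : ∃ r, 1 ≤ r ∧ dheight l r = 0 := ⟨l.length, hL, hD.2⟩
  obtain ⟨hr1, hr0⟩ := Nat.find_spec hP
  set r := Nat.find hP with hrdef
  have hrle : r ≤ l.length := Nat.find_le ⟨hL, hD.2⟩
  have hmin : ∀ j, j < r → ¬(1 ≤ j ∧ dheight l j = 0) := fun j hj => Nat.find_min hP hj
  have h_pos : ∀ j, 1 ≤ j → j < r → 1 ≤ dheight l j := by
    intro j hj1 hj2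
    have hnz := hmin j hj2
    have h0 : 0 ≤ dheight l j := hD.1 j (by rw [Finset.mem_range]; omega)
    by_contra hc
    exact hnz ⟨hj1, by omega⟩
  -- first step is up
  have h0lt : 0 < l.length := by omega
  have hstep0 := dheight_succ l h0lt
  have h0le : 0 ≤ dheight l 1 := hD.1 1 (by rw [Finset.mem_range]; omega)
  have hget0 : l[0]'h0lt = true := by
    by_contra hb
    rw [Bool.not_eq_true] at hb
    rw [hstep0, hb, dheight_zero] at h0le
    simp at h0le
  have h1val : dheight l 1 = 1 := by
    rw [show (1 : ℕ) = 0 + 1 from rfl, hstep0, hget0, dheight_zero]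
    simp
  have hr2 : 2 ≤ r := by
    by_contra h
    have hre1 : r = 1 := by omega
    rw [hre1, h1val] at hr0
    exact absurd hr0 (by norm_num)
  -- r is even
  obtain ⟨ch, hch⟩ := dheight_parity l r hrle
  obtain ⟨t, ht⟩ : ∃ t, r = 2 * t := ⟨r / 2, by omega⟩
  -- step r is down
  have hrlt : r - 1 < l.length := by omega
  have hstepr := dheight_succ l hrlt
  rw [show r - 1 + 1 = r from by omega, hr0] at hstepr
  have hposr : 1 ≤ dheight l (r - 1) := h_pos (r - 1) (by omega) (by omega)
  have hgetr : l[r - 1]'hrlt = false := by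
    by_contra hb
    rw [Bool.not_eq_false] at hb
    rw [hb] at hstepr
    simp at hstepr
    omega
  -- list decomposition
  set u : List Bool := (l.drop 1).take (r - 2) with hu_def
  set v : List Bool := l.drop r with hv_def
  have hsplit : l = true :: u ++ false :: v := by
    have e1 : l.drop 0 = l[0]'h0lt :: l.drop 1 := List.drop_eq_getElem_cons h0lt
    rw [List.drop_zero, hget0] at e1
    have e4 : l.drop (r - 1) = l[r - 1]'hrlt :: l.drop r := by
      have h := List.drop_eq_getElem_cons hrlt
      rwa [show r - 1 + 1 = r from by omega] at h
    rw [hgetr] at e4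
    have e2 : l.drop 1 = u ++ (l.drop 1).drop (r - 2) := (List.take_append_drop _ _).symm
    have e3 : (l.drop 1).drop (r - 2) = l.drop (r - 1) := by
      rw [List.drop_drop, show 1 + (r - 2) = r - 1 from by omega]
    rw [e3, e4] at e2
    rw [e1, e2]
    rfl
  have hul : u.length = r - 2 := by
    rw [hu_def, List.length_take, List.length_drop]
    omega
  have hvl : v.length = l.length - r := by
    rw [hv_def, List.length_drop]
  -- heights of u and v in terms of l
  have hu_height : ∀ j, j ≤ u.length → dheight u j = dheight l (j + 1) - 1 := by
    intro j hj
    have h := phi_height_low u v hj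
    rw [← hsplit] at h
    omega
  have hv_height : ∀ i, dheight v i = dheight l (r + i) := by
    intro i
    have h1 := phi_height_high u v i
    rw [← hsplit, show u.length + 2 + i = r + i from by omega] at h1
    have h2 := hu_height u.length (le_refl _)
    rw [show u.length + 1 = r - 1 from by omega] at h2
    have h3 : dheight u u.length = 0 := by omega
    rw [h3] at h1
    omega
  have huD : IsDyck u := by
    constructor
    · intro j hj
      rw [Finset.mem_range] at hj
      rw [hu_height j (by omega)]
      rcases Nat.eq_zero_or_pos j with h0 | hj1
      · subst h0; rw [h1val]; omega
      · have := h_pos (j + 1) (by omega) (by omega)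
        omega
    · rw [hu_height u.length (le_refl _), show u.length + 1 = r - 1 from by omega]
      omega
  have hvD : IsDyck v := by
    constructor
    · intro i hi
      rw [Finset.mem_range] at hi
      rw [hv_height i]
      exact hD.1 (r + i) (by rw [Finset.mem_range]; omega)
    · rw [hv_height v.length, show r + v.length = l.length from by omega]
      exact hD.2
  refine ⟨N - t, u, v, by omega, by omega, by omega, huD, hvD, hsplit⟩

/-! ### Summation over products -/

lemma prod_sum (c : ℝ) (A B : Finset (List Bool)) (f g : List Bool → ℝ) :
    ∑ p ∈ A ×ˢ B, c * f p.1 * g p.2 = c * (∑ x ∈ A, f x) * (∑ y ∈ B, g y) := by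
  rw [Finset.sum_product, mul_assoc, Finset.sum_mul_sum, Finset.mul_sum]
  apply Finset.sum_congr rfl
  intro x _
  rw [Finset.mul_sum]
  apply Finset.sum_congr rfl
  intro y _
  ring

lemma main_bij (q s : ℝ) (N : ℕ) (hN : 1 ≤ N) :
    ∑ x ∈ (range N).sigma (fun k => DY (2 * k) ×ˢ DY (2 * (N - 1 - k))),
        (s * q ^ (N - 1 - x.1) * wt q s x.2.1 * wt q 1 x.2.2)
      = ∑ l ∈ DY (2 * N), wt q s l := by
  apply Finset.sum_bij (fun x _ => true :: x.2.2 ++ false :: x.2.1)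
  · rintro ⟨k, v, u⟩ hx
    rw [Finset.mem_sigma, Finset.mem_product] at hx
    obtain ⟨hk, hv, hu⟩ := hx
    rw [Finset.mem_range] at hk
    rw [mem_DY] at hv hu
    rw [mem_DY]
    constructor
    · rw [phi_length, hv.1, hu.1]; omega
    · exact isDyck_phi hu.2 hv.2
  · rintro ⟨k₁, v₁, u₁⟩ hx₁ ⟨k₂, v₂, u₂⟩ hx₂ heq
    rw [Finset.mem_sigma, Finset.mem_product] at hx₁ hx₂
    obtain ⟨hk₁, hv₁, hu₁⟩ := hx₁
    obtain ⟨hk₂, hv₂, hu₂⟩ := hx₂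
    rw [mem_DY] at hv₁ hu₁ hv₂ hu₂
    obtain ⟨hueq, hveq⟩ := phi_inj_aux hu₁.2 hu₂.2 heq
    have hkk : k₁ = k₂ := by
      have e1 := hv₁.1
      have e2 := hv₂.1
      rw [hveq] at e1
      dsimp only at e1 e2
      omega
    subst hkk
    subst hueq
    subst hveq
    rfl
  · intro l hl
    rw [mem_DY] at hl
    obtain ⟨k, u, v, hk, hul, hvl, huD, hvD, heq⟩ := decomp hN hl.1 hl.2
    refine ⟨⟨k, v, u⟩, ?_, heq.symm⟩
    rw [Finset.mem_sigma, Finset.mem_product, Finset.mem_range, mem_DY, mem_DY]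
    exact ⟨hk, ⟨hvl, hvD⟩, ⟨hul, huD⟩⟩
  · rintro ⟨k, v, u⟩ hx
    rw [Finset.mem_sigma, Finset.mem_product, Finset.mem_range, mem_DY, mem_DY] at hx
    obtain ⟨hk, ⟨hvl, hvD⟩, ⟨hul, huD⟩⟩ := hx
    rw [wt_phi huD hvD hul hvl q s]
    ring

/-! ### The recurrence -/

/-- The q-s Catalan numbers satisfy `G_0(q,s) = 1` and, for `N ≥ 1`,
`G_N(q,s) = ∑_{k=0}^{N-1} s q^{N-k-1} G_k(q,s) G_{N-k-1}(q,1)`. -/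
theorem Gqs_recurrence (q s : ℝ) :
    Gqs 0 q s = 1 ∧
      ∀ N : ℕ, 1 ≤ N →
        Gqs N q s =
          ∑ k ∈ Finset.range N,
            s * q ^ (N - k - 1) * Gqs k q s * Gqs (N - k - 1) q 1 := by
  constructor
  · have hnil : IsDyck ([] : List Bool) := by
      constructor
      · intro k _; rw [dheight_nil]
      · rw [dheight_nil]
    have h0 : DY (2 * 0) = {([] : List Bool)} := by
      ext l
      rw [mem_DY, Finset.mem_singleton]
      constructor
      · rintro ⟨hl, -⟩
        exact List.length_eq_zero_iff.mp (by omega)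
      · rintro rfl
        exact ⟨rfl, hnil⟩
    rw [Gqs_eq, h0, Finset.sum_singleton]
    simp [wt, darea, dreturns]
  · intro N hN
    rw [Gqs_eq, ← main_bij q s N hN, Finset.sum_sigma]
    refine Finset.sum_congr rfl fun k hk => ?_
    rw [Finset.mem_range] at hk
    show ∑ p ∈ DY (2 * k) ×ˢ DY (2 * (N - 1 - k)),
        s * q ^ (N - 1 - k) * wt q s p.1 * wt q 1 p.2 = _
    rw [prod_sum, show N - k - 1 = N - 1 - k from by omega, Gqs_eq, Gqs_eq]
end

section
/- For a Dyck path of semi-length N with exactly m returns to the x-axis at positions 0 = r_0 < r_1 < ... < r_m = 2N, setting k_i = (r_i − r_{i−1})/2, the area satisfies a(w) ≤ (1/2)·∑_{i=1}^m k_i(k_i − 1), and hence the area deficit satisfies N(N−1)/2 − a(w) ≥ (m−1)(N − m/2). -/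
open Finset

lemma dheight_step_abs (w : List Bool) (k : ℕ) :
    |dheight w (k + 1) - dheight w k| ≤ 1 := by
  unfold dheight
  rw [List.take_succ, List.map_append, List.sum_append, add_sub_cancel_left]
  cases h : w[k]? with
  | none => simp
  | some b => cases b <;> simp

lemma dheight_step (w : List Bool) (k : ℕ) (hk : k < w.length) :
    dheight w (k + 1) = dheight w k + (if w[k] then 1 else -1) := by
  unfold dheight
  rw [List.take_succ, List.map_append, List.sum_append, List.getElem?_eq_getElem hk]
  simp

lemma dheight_lipschitz (w : List Bool) (a : ℕ) : ∀ b, a ≤ b →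
    |dheight w b - dheight w a| ≤ (b : ℤ) - a := by
  intro b
  induction b with
  | zero => intro h; interval_cases a; simp
  | succ n ih =>
    intro h
    rcases Nat.eq_or_lt_of_le h with h' | h'
    · rw [← h']; simp
    · have h1 := ih (by omega)
      have h2 := dheight_step_abs w n
      have := abs_sub_le (dheight w (n + 1)) (dheight w n) (dheight w a)
      push_cast
      push_cast at h1
      linarith

lemma block_bound (w : List Bool) (a c : ℕ) (ha : dheight w a = 0)
    (hb : dheight w (a + 2 * c) = 0) :
    ∑ k ∈ Ioc a (a + 2 * c), dheight w k ≤ (c : ℤ) ^ 2 := by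
  have hsplit : ∑ k ∈ Ioc a (a + c), dheight w k + ∑ k ∈ Ioc (a + c) (a + 2 * c), dheight w k
      = ∑ k ∈ Ioc a (a + 2 * c), dheight w k :=
    sum_Ioc_consecutive _ (by omega) (by omega)
  have h1 : ∑ k ∈ Ioc a (a + c), dheight w k ≤ ∑ j ∈ Ioc 0 c, (j : ℤ) := by
    have he : Ioc a (a + c) = Finset.map (addLeftEmbedding a) (Ioc 0 c) := by
      rw [map_add_left_Ioc, Nat.add_zero]
    rw [he, sum_map]
    apply sum_le_sum
    intro j hj
    simp only [addLeftEmbedding_apply]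
    have := dheight_lipschitz w a (a + j) (by omega)
    rw [ha] at this
    have := abs_le.mp this
    push_cast at this ⊢
    linarith [this.2]
  have h2 : ∑ k ∈ Ioc (a + c) (a + 2 * c), dheight w k ≤ ∑ j ∈ Ioc 0 c, ((c : ℤ) - j) := by
    have he : Ioc (a + c) (a + 2 * c) = Finset.map (addLeftEmbedding (a + c)) (Ioc 0 c) := by
      rw [map_add_left_Ioc]; congr 1; omega
    rw [he, sum_map]
    apply sum_le_sum
    intro j hj
    simp only [addLeftEmbedding_apply]
    have := dheight_lipschitz w (a + c + j) (a + 2 * c) (by simp at hj; omega)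
    rw [hb] at this
    have := abs_le.mp this
    simp at hj
    push_cast at this ⊢
    linarith [this.1]
  have h3 : ∑ j ∈ Ioc 0 c, (j : ℤ) + ∑ j ∈ Ioc 0 c, ((c : ℤ) - j) = (c : ℤ) ^ 2 := by
    rw [← sum_add_distrib]
    simp only [add_sub_cancel]
    rw [sum_const, Nat.card_Ioc, Nat.sub_zero, nsmul_eq_mul]
    ring
  linarith

lemma chain_mono (r : ℕ → ℕ) : ∀ n, (∀ i, i < n → r i ≤ r (i + 1)) → r 0 ≤ r n := by
  intro n
  induction n with
  | zero => intro _; exact le_rfl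
  | succ k ih => intro h; exact le_trans (ih fun i hi => h i (by omega)) (h k (by omega))

lemma sum_blocks (g : ℕ → ℤ) (r : ℕ → ℕ) :
    ∀ m, (∀ i, i < m → r i ≤ r (i + 1)) →
    ∑ i ∈ Finset.Icc 1 m, ∑ k ∈ Finset.Ioc (r (i - 1)) (r i), g k
      = ∑ k ∈ Finset.Ioc (r 0) (r m), g k := by
  intro m
  induction m with
  | zero => intro _; simp
  | succ n ih =>
    intro h
    rw [Finset.sum_Icc_succ_top (by omega), ih (fun i hi => h i (by omega))]
    have hn : n + 1 - 1 = n := rfl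
    rw [hn]
    exact Finset.sum_Ioc_consecutive g (chain_mono r n (fun i hi => h i (by omega)))
      (h n (by omega))

lemma telescope (r : ℕ → ℕ) (k : ℕ → ℕ) :
    ∀ m, (∀ i, 1 ≤ i → i ≤ m → r (i - 1) + k i = r i) →
      r 0 + ∑ i ∈ Finset.Icc 1 m, k i = r m := by
  intro m
  induction m with
  | zero => intro _; simp
  | succ n ih =>
    intro h
    rw [Finset.sum_Icc_succ_top (by omega), ← add_assoc, ih (fun i h1 h2 => h i h1 (by omega))]
    have := h (n + 1) (by omega) le_rfl
    simpa using this

/-- For a Dyck path of semi-length `N` with exactly `m` returns at positions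
`0 = r_0 < r_1 < ... < r_m = 2N`, with `k_i = (r_i − r_{i−1})/2`, the area
satisfies `a(w) ≤ (1/2)∑ k_i(k_i − 1)`, and hence
`N(N−1)/2 − a(w) ≥ (m−1)(N − m/2)`. -/
theorem area_deficit_bound (N m : ℕ) (hm : 1 ≤ m) (w : List Bool)
    (hlen : w.length = 2 * N) (hw : IsDyck w) (r : ℕ → ℕ)
    (hr0 : r 0 = 0) (hrm : r m = 2 * N)
    (hmono : StrictMonoOn r (Set.Icc 0 m))
    (hret : ∀ i, 1 ≤ i → i ≤ m → dheight w (r i) = 0)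
    (hcount : dreturns w = m) :
    (darea w : ℝ) ≤
        (1 / 2) * ∑ i ∈ Finset.Icc 1 m,
          (((r i : ℝ) - r (i - 1)) / 2) * ((((r i : ℝ) - r (i - 1)) / 2) - 1) ∧
      (N : ℝ) * (N - 1) / 2 - (darea w : ℝ) ≥
        ((m : ℝ) - 1) * ((N : ℝ) - (m : ℝ) / 2) := by
  have hadj : ∀ i, i < m → r i < r (i + 1) := fun i hi =>
    hmono ⟨Nat.zero_le _, by omega⟩ ⟨Nat.zero_le _, by omega⟩ (by omega)
  have hrle : ∀ i, i ≤ m → r i ≤ 2 * N := by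
    intro i hi
    rw [← hrm]
    rcases Nat.eq_or_lt_of_le hi with h | h
    · rw [h]
    · exact le_of_lt (hmono ⟨Nat.zero_le _, hi⟩ ⟨Nat.zero_le _, le_rfl⟩ h)
  have hret0 : ∀ i, i ≤ m → dheight w (r i) = 0 := by
    intro i hi
    rcases Nat.eq_zero_or_pos i with h | h
    · rw [h, hr0]; exact dheight_zero w
    · exact hret i h hi
  have heven : ∀ i, i ≤ m → Even (r i) := by
    intro i hi
    have hp := dheight_parity w (r i) (by rw [hlen]; exact hrle i hi)
    rw [hret0 i hi, zero_add] at hp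
    exact_mod_cast hp
  set k : ℕ → ℕ := fun i => (r i - r (i - 1)) / 2 with hk
  have hk2 : ∀ i, 1 ≤ i → i ≤ m → r (i - 1) + 2 * k i = r i := by
    intro i h1 h2
    obtain ⟨x, hx⟩ := heven i h2
    obtain ⟨y, hy⟩ := heven (i - 1) (by omega)
    have hlt : r (i - 1) < r i := by
      have := hadj (i - 1) (by omega)
      rwa [Nat.sub_add_cancel h1] at this
    simp only [hk]
    omega
  have hk1 : ∀ i, 1 ≤ i → i ≤ m → 1 ≤ k i := by
    intro i h1 h2
    have hlt : r (i - 1) < r i := by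
      have := hadj (i - 1) (by omega)
      rwa [Nat.sub_add_cancel h1] at this
    have := hk2 i h1 h2
    omega
  have hksum : ∑ i ∈ Finset.Icc 1 m, k i = N := by
    have ht := telescope r (fun i => 2 * k i) m (fun i h1 h2 => hk2 i h1 h2)
    rw [hr0, hrm, zero_add] at ht
    rw [← Finset.mul_sum] at ht
    omega
  -- the key sum bound
  set S : ℤ := ∑ kk ∈ Finset.range w.length, dheight w (kk + 1) with hSdef
  have hS1 : S = ∑ kk ∈ Finset.Ioc 0 (2 * N), dheight w kk := by
    rw [hSdef, hlen]
    rw [show Finset.Ioc 0 (2 * N) = Finset.Ico 1 (2 * N + 1) by ext x; simp; omega]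
    rw [Finset.sum_Ico_eq_sum_range]
    apply Finset.sum_congr (by norm_num)
    intro x _
    rw [add_comm]
  have hS2 : S ≤ ∑ i ∈ Finset.Icc 1 m, (k i : ℤ) ^ 2 := by
    rw [hS1, ← hr0, ← hrm, ← sum_blocks (dheight w) r m (fun i hi => le_of_lt (hadj i hi))]
    apply Finset.sum_le_sum
    intro i hi
    simp only [Finset.mem_Icc] at hi
    have h2 := hk2 i hi.1 hi.2
    rw [← h2]
    exact block_bound w (r (i - 1)) (k i) (hret0 (i - 1) (by omega))
      (by rw [h2]; exact hret0 i hi.2)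
  have hdarea : darea w = (S - (N : ℤ)) / 2 := by
    unfold darea
    rw [← hSdef, hlen]
    congr 1
    congr 1
    push_cast
    omega
  have hfloor : (darea w : ℝ) ≤ ((S : ℝ) - N) / 2 := by
    rw [hdarea]
    have h1 : 2 * ((S - (N : ℤ)) / 2) ≤ S - N := by omega
    have h2 : ((2 * ((S - (N : ℤ)) / 2) : ℤ) : ℝ) ≤ ((S - (N : ℤ) : ℤ) : ℝ) := by
      exact_mod_cast h1
    push_cast at h2
    linarith
  have hkR : (∑ i ∈ Finset.Icc 1 m, (k i : ℝ)) = N := by exact_mod_cast hksum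
  have hSb : (S : ℝ) ≤ ∑ i ∈ Finset.Icc 1 m, (k i : ℝ) ^ 2 := by
    have : ((∑ i ∈ Finset.Icc 1 m, (k i : ℤ) ^ 2 : ℤ) : ℝ)
        = ∑ i ∈ Finset.Icc 1 m, (k i : ℝ) ^ 2 := by push_cast; rfl
    rw [← this]
    exact_mod_cast hS2
  have hexp : ∑ i ∈ Finset.Icc 1 m, (k i : ℝ) * ((k i : ℝ) - 1)
      = (∑ i ∈ Finset.Icc 1 m, (k i : ℝ) ^ 2) - N := by
    rw [← hkR, ← Finset.sum_sub_distrib]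
    apply Finset.sum_congr rfl
    intros
    ring
  have part1 : (darea w : ℝ) ≤ (1 / 2) * ∑ i ∈ Finset.Icc 1 m, (k i : ℝ) * ((k i : ℝ) - 1) := by
    rw [hexp]
    linarith
  have hsum_eq : ∑ i ∈ Finset.Icc 1 m,
        (((r i : ℝ) - r (i - 1)) / 2) * ((((r i : ℝ) - r (i - 1)) / 2) - 1)
      = ∑ i ∈ Finset.Icc 1 m, (k i : ℝ) * ((k i : ℝ) - 1) := by
    apply Finset.sum_congr rfl
    intro i hi
    simp only [Finset.mem_Icc] at hi
    have h2 := hk2 i hi.1 hi.2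
    have hcast : (r (i - 1) : ℝ) + 2 * (k i : ℝ) = r i := by exact_mod_cast h2
    have heq : ((r i : ℝ) - r (i - 1)) / 2 = (k i : ℝ) := by linarith
    rw [heq]
  -- part 2 : bound the sum of k_i(k_i - 1)
  have hmN : m ≤ N := by
    have hle : ∑ i ∈ Finset.Icc 1 m, 1 ≤ ∑ i ∈ Finset.Icc 1 m, k i :=
      Finset.sum_le_sum (fun i hi => by
        simp only [Finset.mem_Icc] at hi; exact hk1 i hi.1 hi.2)
    simp only [Finset.sum_const, smul_eq_mul, mul_one, Nat.card_Icc, hksum] at hle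
    omega
  have hki_le : ∀ i ∈ Finset.Icc 1 m, k i + m ≤ N + 1 := by
    intro i hi
    have himem := hi
    simp only [Finset.mem_Icc] at hi
    have h1 : k i + ∑ j ∈ (Finset.Icc 1 m).erase i, k j = N := by
      rw [Finset.add_sum_erase _ k himem]; exact hksum
    have hc : ((Finset.Icc 1 m).erase i).card = m - 1 := by
      rw [Finset.card_erase_of_mem himem, Nat.card_Icc]
      omega
    have h2 : m - 1 ≤ ∑ j ∈ (Finset.Icc 1 m).erase i, k j := by
      have := Finset.card_nsmul_le_sum ((Finset.Icc 1 m).erase i) k 1 (fun j hj => by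
        simp only [Finset.mem_erase, Finset.mem_Icc] at hj
        exact hk1 j hj.2.1 hj.2.2)
      simpa [hc] using this
    omega
  have hZ : ∑ i ∈ Finset.Icc 1 m, (k i : ℤ) * ((k i : ℤ) - 1)
      ≤ ((N : ℤ) + 1 - m) * ((N : ℤ) - m) := by
    have hstep : ∀ i ∈ Finset.Icc 1 m,
        (k i : ℤ) * ((k i : ℤ) - 1) ≤ ((N : ℤ) + 1 - m) * ((k i : ℤ) - 1) := by
      intro i hi
      have h1 := hki_le i hi
      simp only [Finset.mem_Icc] at hi
      have h0 : (1 : ℤ) ≤ (k i : ℤ) := by exact_mod_cast hk1 i hi.1 hi.2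
      have hup : (k i : ℤ) ≤ (N : ℤ) + 1 - m := by omega
      nlinarith
    calc ∑ i ∈ Finset.Icc 1 m, (k i : ℤ) * ((k i : ℤ) - 1)
        ≤ ∑ i ∈ Finset.Icc 1 m, ((N : ℤ) + 1 - m) * ((k i : ℤ) - 1) :=
          Finset.sum_le_sum hstep
      _ = ((N : ℤ) + 1 - m) * (∑ i ∈ Finset.Icc 1 m, ((k i : ℤ) - 1)) := by
          rw [Finset.mul_sum]
      _ = ((N : ℤ) + 1 - m) * ((N : ℤ) - m) := by
          congr 1
          rw [Finset.sum_sub_distrib]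
          have h1 : ∑ i ∈ Finset.Icc 1 m, (k i : ℤ) = N := by exact_mod_cast hksum
          rw [h1, Finset.sum_const, Nat.card_Icc, nsmul_eq_mul, mul_one]
          have : ((m + 1 - 1 : ℕ) : ℤ) = (m : ℤ) := by omega
          rw [this]
  have hZr : ∑ i ∈ Finset.Icc 1 m, (k i : ℝ) * ((k i : ℝ) - 1)
      ≤ ((N : ℝ) + 1 - m) * ((N : ℝ) - m) := by
    have hcl : ((∑ i ∈ Finset.Icc 1 m, (k i : ℤ) * ((k i : ℤ) - 1) : ℤ) : ℝ)
        = ∑ i ∈ Finset.Icc 1 m, (k i : ℝ) * ((k i : ℝ) - 1) := by push_cast; rfl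
    rw [← hcl]
    exact_mod_cast hZ
  constructor
  · rw [hsum_eq]; exact part1
  · have hid : (N : ℝ) * (N - 1) / 2 - ((m : ℝ) - 1) * ((N : ℝ) - (m : ℝ) / 2)
        = ((N : ℝ) + 1 - m) * ((N : ℝ) - m) / 2 := by ring
    rw [ge_iff_le]
    linarith
end

section
/- The single-parity partition function of the half-filled constrained exclusion process satisfies Z_N(q) = ∑_{w ∈ D_N} (N/m(w))·q^{a(w)}, and consequently Z_N(q) = N·∫_0^1 G_N(q,s)/s ds. -/
open Finset

/-- Height function of a ring configuration (`true` = particle, contributing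
step `−1`; `false` = hole, step `+1`): `h_k = ∑_{i<k} (1 − 2η_i)`. -/
def cheight (η : ℕ → Bool) (k : ℕ) : ℤ :=
  ∑ i ∈ Finset.range k, (if η i then (-1 : ℤ) else 1)

/-- Minimum of the height function over `k ∈ {0,…,L}`. -/
def chmin (L : ℕ) (η : ℕ → Bool) : ℤ :=
  Finset.min' ((Finset.range (L + 1)).image (cheight η))
    (Finset.Nonempty.image ⟨0, Finset.mem_range.mpr (Nat.succ_pos L)⟩ _)

/-- Energy of a half-filled configuration on a ring of `2N` sites:
`E(η) = (1/2)∑_{k=1}^{2N}(h_k − h_min − 1/2)`. -/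
def cenergy (N : ℕ) (η : ℕ → Bool) : ℤ :=
  ((∑ k ∈ Finset.Icc 1 (2 * N), cheight η k) - 2 * N * chmin (2 * N) η - N) / 2

/-- Extension of a `Fin`-indexed configuration to `ℕ`. -/
def cext (N : ℕ) (f : Fin (2 * N) → Bool) : ℕ → Bool :=
  fun i => if h : i < 2 * N then f ⟨i, h⟩ else false

/-- Membership in the even ergodic component: half filling and all minimum
sites at even positions. -/
def EvenComp (N : ℕ) (η : ℕ → Bool) : Prop :=
  (∑ i ∈ Finset.range (2 * N), (if η i then 1 else 0)) = N ∧
    ∀ k ∈ Finset.Icc 1 (2 * N), cheight η k = chmin (2 * N) η → Even k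

open scoped Classical in
/-- Single-parity partition function `Z_N(q) = ∑_{η ∈ A_N^{(e)}} q^{E(η)}`. -/
noncomputable def Zconf (N : ℕ) (q : ℝ) : ℝ :=
  ∑ f : Fin (2 * N) → Bool,
    if EvenComp N (cext N f) then q ^ (cenergy N (cext N f)).toNat else 0

namespace ZP

lemma cheight_succ (η : ℕ → Bool) (k : ℕ) :
    cheight η (k+1) = cheight η k + (if η k then (-1:ℤ) else 1) :=
  Finset.sum_range_succ _ _

lemma parity_cheight (η : ℕ → Bool) (k : ℕ) : Even (cheight η k + k) := by
  induction k with
  | zero => simp [cheight]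
  | succ k ih =>
    rcases ih with ⟨m, hm⟩
    by_cases h : η k
    · exact ⟨m, by rw [cheight_succ, if_pos h]; push_cast; omega⟩
    · exact ⟨m+1, by rw [cheight_succ, if_neg h]; push_cast; omega⟩

lemma cext_lt {N : ℕ} (f : Fin (2*N) → Bool) {i : ℕ} (h : i < 2*N) :
    cext N f i = f ⟨i, h⟩ := by simp [cext, h]

lemma step_not (b : Bool) : (if (!b) then (-1:ℤ) else 1) = - (if b then (-1:ℤ) else 1) := by
  cases b <;> simp

lemma dheight_succ (w : List Bool) (k : ℕ) (hk : k < w.length) :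
    dheight w (k+1) = dheight w k + (if w[k] then (1:ℤ) else -1) := by
  unfold dheight
  rw [List.take_succ, List.getElem?_eq_getElem hk, Option.toList_some,
    List.map_append, List.sum_append, List.map_singleton, List.sum_singleton]

lemma dheight_ofFn {N : ℕ} (f : Fin (2*N) → Bool) (k : ℕ) (hk : k ≤ 2*N) :
    dheight (List.ofFn f) k = - cheight (cext N f) k := by
  induction k with
  | zero => simp [dheight, cheight]
  | succ k ih =>
    have hk' : k < 2*N := hk
    rw [cheight_succ, dheight_succ _ _ (by simpa using hk'),
      ih (le_of_lt hk'), cext_lt f hk']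
    simp only [List.getElem_ofFn, Fin.cast_mk]
    cases f ⟨k, hk'⟩ <;> simp [add_comm]

def Tr (N r : ℕ) (f : Fin (2*N) → Bool) : Fin (2*N) → Bool :=
  fun i => ! f ⟨((i:ℕ) + r) % (2*N), Nat.mod_lt _ i.pos⟩

lemma Tr_Tr {N r r' : ℕ} (h : r + r' = 2*N) (f : Fin (2*N) → Bool) :
    Tr N r' (Tr N r f) = f := by
  funext i
  simp only [Tr, Bool.not_not]
  congr 1
  apply Fin.ext
  simp only []
  show ((↑i + r') % (2*N) + r) % (2*N) = ↑i
  rw [Nat.mod_add_mod]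
  have : (i:ℕ) + r' + r = i + 2*N := by omega
  rw [this, Nat.add_mod_right, Nat.mod_eq_of_lt i.isLt]

def hw (N : ℕ) (f : Fin (2*N) → Bool) (t : ℕ) : ℤ :=
  if t ≤ 2*N then cheight (cext N f) t else cheight (cext N f) (t - 2*N)

lemma pivot {N : ℕ} (f : Fin (2*N) → Bool) (hf : cheight (cext N f) (2*N) = 0)
    {r : ℕ} (hr : r ≤ 2*N) {j : ℕ} (hj : j ≤ 2*N) :
    cheight (cext N (Tr N r f)) j = cheight (cext N f) r - hw N f (r + j) := by
  induction j with
  | zero => simp [hw, hr, cheight]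
  | succ j ih =>
    have hjn : j < 2*N := hj
    rw [cheight_succ, ih (le_of_lt hjn), cext_lt (Tr N r f) hjn]
    have hstep : ∀ t (ht : t < 2*N),
        (if Tr N r f ⟨t, ht⟩ then (-1:ℤ) else 1)
          = - (if cext N f ((t + r) % (2*N)) then (-1:ℤ) else 1) := by
      intro t ht
      have hm : (t + r) % (2*N) < 2*N := Nat.mod_lt _ (by omega)
      rw [cext_lt f hm]
      show (if (! f ⟨(t + r) % (2*N), hm⟩) then (-1:ℤ) else 1) = _
      exact step_not _
    rw [hstep j hjn]
    have key : hw N f (r + (j+1)) = hw N f (r + j) + (if cext N f ((j + r) % (2*N)) then (-1:ℤ) else 1) := by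
      rcases lt_trichotomy (r + j) (2*N) with hc | hc | hc
      · have h1 : (j + r) % (2*N) = j + r := Nat.mod_eq_of_lt (by omega)
        have h2 : r + (j+1) ≤ 2*N := by omega
        simp only [hw, if_pos h2, if_pos (le_of_lt hc)]
        rw [h1, show r + (j+1) = (j + r) + 1 by omega, cheight_succ,
          show j + r = r + j by omega]
      · -- r + j = 2N
        have h1 : (j + r) % (2*N) = 0 := by
          rw [show j + r = 2*N by omega]; simp
        have h2 : ¬ (r + (j+1) ≤ 2*N) := by omega
        simp only [hw, if_neg h2, if_pos (le_of_eq hc)]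
        rw [h1, hc, hf, show r + (j+1) - 2*N = 1 by omega, cheight_succ]
        simp [cheight]
      · -- r + j > 2N
        have hn : 0 < 2*N := by omega
        have h1 : (j + r) % (2*N) = j + r - 2*N := by
          rw [Nat.mod_eq_sub_mod (by omega), Nat.mod_eq_of_lt (by omega)]
        have h2 : ¬ (r + (j+1) ≤ 2*N) := by omega
        have h3 : ¬ (r + j ≤ 2*N) := by omega
        simp only [hw, if_neg h2, if_neg h3]
        rw [h1, show r + (j+1) - 2*N = (r + j - 2*N) + 1 by omega, cheight_succ,
          show j + r - 2*N = r + j - 2*N by omega]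
    rw [key]
    ring


lemma chmin_le {L : ℕ} (η : ℕ → Bool) {t : ℕ} (ht : t ≤ L) : chmin L η ≤ cheight η t :=
  Finset.min'_le _ _ (Finset.mem_image.mpr ⟨t, Finset.mem_range.mpr (by omega), rfl⟩)

lemma chmin_attained (L : ℕ) (η : ℕ → Bool) : ∃ t, t ≤ L ∧ cheight η t = chmin L η := by
  have h := Finset.min'_mem ((Finset.range (L + 1)).image (cheight η))
    (Finset.Nonempty.image ⟨0, Finset.mem_range.mpr (Nat.succ_pos L)⟩ _)
  rcases Finset.mem_image.mp h with ⟨t, ht, hh⟩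
  exact ⟨t, by simpa [Nat.lt_succ_iff] using Finset.mem_range.mp ht, hh⟩

lemma halffill {N : ℕ} (η : ℕ → Bool) :
    (∑ i ∈ Finset.range (2 * N), (if η i then 1 else 0)) = N ↔ cheight η (2*N) = 0 := by
  have key : ∀ L : ℕ, cheight η L
      + 2 * ((∑ i ∈ Finset.range L, (if η i then (1:ℕ) else 0) : ℕ) : ℤ) = L := by
    intro L
    induction L with
    | zero => simp [cheight]
    | succ L ih =>
      rw [cheight_succ, Finset.sum_range_succ]
      by_cases h : η L <;> simp only [h, if_true, if_false] <;> push_cast <;>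
        push_cast at ih <;> omega
  constructor
  · intro h
    have h2 := key (2*N)
    rw [h] at h2
    push_cast at h2
    linarith
  · intro h
    have h2 := key (2*N)
    rw [h] at h2
    have : ((∑ i ∈ Finset.range (2*N), (if η i then (1:ℕ) else 0) : ℕ) : ℤ) = (N:ℤ) := by
      push_cast at h2 ⊢; linarith
    exact_mod_cast this

lemma minpos_nonempty {N : ℕ} (hN : 1 ≤ N) (η : ℕ → Bool) (hh : cheight η (2*N) = 0) :
    ∃ t ∈ Finset.Icc 1 (2*N), cheight η t = chmin (2*N) η := by
  obtain ⟨t, ht, hmt⟩ := chmin_attained (2*N) η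
  by_cases h0 : t = 0
  · refine ⟨2*N, Finset.mem_Icc.mpr ⟨by omega, le_rfl⟩, ?_⟩
    rw [hh, ← hmt, h0]
    simp [cheight]
  · exact ⟨t, Finset.mem_Icc.mpr ⟨by omega, ht⟩, hmt⟩

lemma hw_ge {N : ℕ} (f : Fin (2*N) → Bool) {t : ℕ} (ht : t ≤ 4*N) :
    chmin (2*N) (cext N f) ≤ hw N f t := by
  unfold hw; split
  · exact chmin_le _ (by omega)
  · exact chmin_le _ (by omega)

lemma dheight_Tr {N : ℕ} (f : Fin (2*N) → Bool) (hf : cheight (cext N f) (2*N) = 0)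
    {k j : ℕ} (hk : k ≤ 2*N) (hj : j ≤ 2*N) :
    dheight (List.ofFn (Tr N k f)) j = hw N f (k + j) - cheight (cext N f) k := by
  rw [dheight_ofFn _ _ hj, pivot f hf hk hj]; ring

lemma forward {N : ℕ} (f : Fin (2*N) → Bool)
    (hhalf : cheight (cext N f) (2*N) = 0)
    {k : ℕ} (hk1 : 1 ≤ k) (hk2 : k ≤ 2*N)
    (hmin : cheight (cext N f) k = chmin (2*N) (cext N f)) :
    IsDyck (List.ofFn (Tr N k f))
    ∧ darea (List.ofFn (Tr N k f)) = cenergy N (cext N f)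
    ∧ dreturns (List.ofFn (Tr N k f)) =
      ((Finset.Icc 1 (2*N)).filter
        (fun t => cheight (cext N f) t = chmin (2*N) (cext N f))).card := by
  have len : (List.ofFn (Tr N k f)).length = 2*N := List.length_ofFn
  have hwk : hw N f (k + 2*N) = cheight (cext N f) k := by
    unfold hw; rw [if_neg (by omega)]; congr 1; omega
  refine ⟨⟨?_, ?_⟩, ?_, ?_⟩
  · intro j hj
    rw [len] at hj
    have hj' : j ≤ 2*N := by simpa [Nat.lt_succ_iff] using Finset.mem_range.mp hj
    rw [dheight_Tr f hhalf hk2 hj', hmin, sub_nonneg]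
    exact hw_ge f (by omega)
  · rw [len, dheight_Tr f hhalf hk2 le_rfl, hwk]; ring
  · -- area
    unfold darea
    rw [len]
    have e1 : ∀ j ∈ Finset.range (2*N),
        dheight (List.ofFn (Tr N k f)) (j+1)
          = hw N f (k + (j+1)) - chmin (2*N) (cext N f) := by
      intro j hj
      rw [dheight_Tr f hhalf hk2 (by have := Finset.mem_range.mp hj; omega), hmin]
    rw [Finset.sum_congr rfl e1, Finset.sum_sub_distrib, Finset.sum_const, Finset.card_range]
    have hw_sum : ∑ j ∈ Finset.range (2*N), hw N f (k + (j+1))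
        = ∑ t ∈ Finset.Icc 1 (2*N), cheight (cext N f) t := by
      have split : ∑ j ∈ Finset.range (2*N), hw N f (k+(j+1))
          = ∑ j ∈ Finset.Ico 0 (2*N - k), hw N f (k+(j+1))
            + ∑ j ∈ Finset.Ico (2*N - k) (2*N), hw N f (k+(j+1)) := by
        rw [Finset.sum_Ico_consecutive _ (Nat.zero_le _) (by omega), ← Finset.range_eq_Ico]
      have p1 : ∑ j ∈ Finset.Ico 0 (2*N - k), hw N f (k+(j+1))
          = ∑ t ∈ Finset.Ico (k+1) (2*N+1), cheight (cext N f) t := by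
        rw [Finset.sum_Ico_eq_sum_range, Finset.sum_Ico_eq_sum_range]
        apply Finset.sum_congr (by rw [show 2*N - k - 0 = 2*N + 1 - (k+1) from by omega])
        intro j hj
        have hjlt : j < 2*N + 1 - (k+1) := Finset.mem_range.mp hj
        unfold hw
        rw [if_pos (by omega)]
        congr 1; omega
      have p2 : ∑ j ∈ Finset.Ico (2*N - k) (2*N), hw N f (k+(j+1))
          = ∑ t ∈ Finset.Ico 1 (k+1), cheight (cext N f) t := by
        rw [Finset.sum_Ico_eq_sum_range, Finset.sum_Ico_eq_sum_range]
        apply Finset.sum_congr (by rw [show 2*N - (2*N - k) = k + 1 - 1 from by omega])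
        intro j hj
        unfold hw
        rw [show k + (2*N - k + j + 1) = 2*N + (j+1) from by omega, if_neg (by omega)]
        congr 1; omega
      rw [split, p1, p2, add_comm, Finset.sum_Ico_consecutive _ (by omega : 1 ≤ k+1) (by omega),
        Finset.Ico_add_one_right_eq_Icc]
    rw [hw_sum]
    unfold cenergy
    congr 1
    have : ((2*N : ℕ) : ℤ) / 2 = (N : ℤ) := by push_cast; omega
    rw [this]
    push_cast
    ring
  · -- returns
    unfold dreturns
    rw [len]
    have hcond : (Finset.Icc 1 (2*N)).filter (fun t => dheight (List.ofFn (Tr N k f)) t = 0)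
        = (Finset.Icc 1 (2*N)).filter (fun t => hw N f (k + t) = chmin (2*N) (cext N f)) := by
      apply Finset.filter_congr
      intro t ht
      have ht2 : t ≤ 2*N := (Finset.mem_Icc.mp ht).2
      rw [dheight_Tr f hhalf hk2 ht2, hmin, sub_eq_zero]
    rw [hcond]
    apply Finset.card_nbij' (fun t => if k + t ≤ 2*N then k + t else k + t - 2*N)
      (fun s => if k < s then s - k else s + (2*N - k))
    · intro t ht
      rw [Finset.mem_coe, Finset.mem_filter, Finset.mem_Icc] at ht ⊢
      beta_reduce
      obtain ⟨⟨ht1, ht2⟩, hval⟩ := ht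
      have hival : cheight (cext N f) (if k + t ≤ 2*N then k + t else k + t - 2*N)
          = hw N f (k + t) := by
        unfold hw; split_ifs <;> rfl
      refine ⟨?_, by rw [hival]; exact hval⟩
      split_ifs <;> omega
    · intro s hs
      rw [Finset.mem_coe, Finset.mem_filter, Finset.mem_Icc] at hs ⊢
      beta_reduce
      obtain ⟨⟨hs1, hs2⟩, hval⟩ := hs
      constructor
      · split_ifs <;> omega
      · by_cases c : k < s
        · rw [if_pos c, show k + (s - k) = s from by omega]
          unfold hw; rw [if_pos hs2]; exact hval
        · rw [if_neg c, show k + (s + (2*N - k)) = s + 2*N from by omega]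
          unfold hw; rw [if_neg (by omega), show s + 2*N - 2*N = s from by omega]
          exact hval
    · intro t ht
      rw [Finset.mem_coe, Finset.mem_filter, Finset.mem_Icc] at ht
      beta_reduce
      split_ifs <;> omega
    · intro s hs
      rw [Finset.mem_coe, Finset.mem_filter, Finset.mem_Icc] at hs
      beta_reduce
      split_ifs <;> omega

lemma backward {N : ℕ} (g : Fin (2*N) → Bool) (hD : IsDyck (List.ofFn g))
    {k : ℕ} (hk1 : 1 ≤ k) (hk2 : k ≤ 2*N) (hke : Even k) :
    EvenComp N (cext N (Tr N (2*N - k) g))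
    ∧ cheight (cext N (Tr N (2*N - k) g)) k
        = chmin (2*N) (cext N (Tr N (2*N - k) g)) := by
  set r := 2*N - k with hrdef
  have hg0 : cheight (cext N g) (2*N) = 0 := by
    have h := hD.2
    rw [List.length_ofFn, dheight_ofFn g _ le_rfl] at h
    exact neg_eq_zero.mp h
  have hgle : ∀ j ≤ 2*N, cheight (cext N g) j ≤ 0 := by
    intro j hj
    have h := hD.1 j (Finset.mem_range.mpr (by rw [List.length_ofFn]; omega))
    rw [dheight_ofFn g _ hj] at h
    linarith
  have hwle : ∀ t, t ≤ 4*N → hw N g t ≤ 0 := by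
    intro t ht
    unfold hw; split
    · exact hgle _ (by omega)
    · exact hgle _ (by omega)
  have hr : r ≤ 2*N := by omega
  have hpiv : ∀ j ≤ 2*N, cheight (cext N (Tr N r g)) j
      = cheight (cext N g) r - hw N g (r + j) := fun j hj => pivot g hg0 hr hj
  have hfk : cheight (cext N (Tr N r g)) k = cheight (cext N g) r := by
    rw [hpiv k hk2, show r + k = 2*N from by omega]
    unfold hw; rw [if_pos le_rfl, hg0]; ring
  have hmin : chmin (2*N) (cext N (Tr N r g)) = cheight (cext N g) r := by
    apply le_antisymm
    · rw [← hfk]; exact chmin_le _ hk2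
    · apply Finset.le_min'
      intro y hy
      rcases Finset.mem_image.mp hy with ⟨t, ht, rfl⟩
      have ht' : t ≤ 2*N := by simpa [Nat.lt_succ_iff] using Finset.mem_range.mp ht
      rw [hpiv t ht']
      have := hwle (r+t) (by omega)
      linarith
  have hfull : cheight (cext N (Tr N r g)) (2*N) = 0 := by
    rw [hpiv (2*N) le_rfl]
    by_cases hr0 : r = 0
    · rw [hr0, show 0 + 2*N = 2*N from by omega]
      unfold hw; rw [if_pos le_rfl, hg0]
      simp [cheight]
    · unfold hw
      rw [if_neg (by omega), show r + 2*N - 2*N = r from by omega]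
      ring
  refine ⟨⟨(halffill _).mpr hfull, ?_⟩, by rw [hfk, hmin]⟩
  intro t ht hmint
  obtain ⟨ht1, ht2⟩ := Finset.mem_Icc.mp ht
  rw [hpiv t ht2, hmin] at hmint
  have h0 : hw N g (r + t) = 0 := by linarith
  have h2N : Even (2*N) := ⟨N, by ring⟩
  have hre : Even r := (Nat.even_sub hk2).mpr (by constructor <;> intro <;> [exact hke; exact h2N])
  have hpar : Even (r + t) := by
    unfold hw at h0
    split_ifs at h0 with hc
    · have hp := parity_cheight (cext N g) (r+t)
      rw [h0] at hp
      have hp2 : Even ((r:ℤ) + t) := by simpa using hp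
      exact_mod_cast hp2
    · have hp := parity_cheight (cext N g) (r+t-2*N)
      rw [h0] at hp
      have hp2 : Even (r+t-2*N) := by exact_mod_cast (by simpa using hp : Even ((↑(r+t-2*N) : ℤ)))
      exact ((Nat.even_sub (by omega)).mp hp2).mpr h2N
  exact (Nat.even_add.mp hpar).mp hre


def mcnt (N : ℕ) (f : Fin (2*N) → Bool) : ℕ :=
  ((Finset.Icc 1 (2*N)).filter
    (fun t => cheight (cext N f) t = chmin (2*N) (cext N f))).card

lemma card_even (N : ℕ) : ((Finset.Icc 1 (2*N)).filter (fun k => Even k)).card = N := by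
  have himg : (Finset.Icc 1 (2*N)).filter (fun k => Even k)
      = (Finset.Icc 1 N).image (fun i => 2*i) := by
    ext t
    simp only [Finset.mem_filter, Finset.mem_Icc, Finset.mem_image]
    constructor
    · rintro ⟨⟨h1, h2⟩, c, hc⟩
      exact ⟨c, by omega, by omega⟩
    · rintro ⟨c, ⟨h1, h2⟩, rfl⟩
      exact ⟨by omega, ⟨c, by omega⟩⟩
  rw [himg, Finset.card_image_of_injective _ (fun a b hab => by omega), Nat.card_Icc]
  omega

open scoped Classical in
lemma part1 (N : ℕ) (hN : 1 ≤ N) (q : ℝ) :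
    Zconf N q = ∑ f : Fin (2 * N) → Bool,
          if IsDyck (List.ofFn f)
          then ((N : ℝ) / dreturns (List.ofFn f)) * q ^ (darea (List.ofFn f)).toNat
          else 0 := by
  calc Zconf N q
      = ∑ f : Fin (2*N) → Bool, ∑ k ∈ Finset.Icc 1 (2*N),
          (if EvenComp N (cext N f) ∧ cheight (cext N f) k = chmin (2*N) (cext N f)
           then (1 / (mcnt N f : ℝ)) * q ^ (cenergy N (cext N f)).toNat else 0) := by
        unfold Zconf
        apply Finset.sum_congr rfl
        intro f _
        by_cases hEC : EvenComp N (cext N f)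
        · rw [if_pos hEC]
          simp only [hEC, true_and]
          rw [Finset.sum_ite, Finset.sum_const_zero, add_zero, Finset.sum_const]
          have hm : ((Finset.Icc 1 (2*N)).filter
              (fun k => cheight (cext N f) k = chmin (2*N) (cext N f))).card = mcnt N f := rfl
          rw [hm, nsmul_eq_mul]
          have hm0 : (mcnt N f : ℝ) ≠ 0 := by
            obtain ⟨t, ht, hmt⟩ := minpos_nonempty hN (cext N f) ((halffill _).mp hEC.1)
            have : 0 < mcnt N f :=
              Finset.card_pos.mpr ⟨t, Finset.mem_filter.mpr ⟨ht, hmt⟩⟩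
            exact Nat.cast_ne_zero.mpr (Nat.pos_iff_ne_zero.mp this)
          field_simp
        · rw [if_neg hEC]
          symm
          apply Finset.sum_eq_zero
          intro k _
          rw [if_neg (by tauto)]
    _ = ∑ p ∈ (Finset.univ ×ˢ Finset.Icc 1 (2*N)).filter
          (fun p : (Fin (2*N) → Bool) × ℕ =>
            EvenComp N (cext N p.1) ∧ cheight (cext N p.1) p.2 = chmin (2*N) (cext N p.1)),
          (1 / (mcnt N p.1 : ℝ)) * q ^ (cenergy N (cext N p.1)).toNat := by
        rw [Finset.sum_filter, Finset.sum_product]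
    _ = ∑ p ∈ (Finset.univ ×ˢ Finset.Icc 1 (2*N)).filter
          (fun p : (Fin (2*N) → Bool) × ℕ => IsDyck (List.ofFn p.1) ∧ Even p.2),
          (1 / (dreturns (List.ofFn p.1) : ℝ)) * q ^ (darea (List.ofFn p.1)).toNat := by
        refine Finset.sum_nbij' (fun p => (Tr N p.2 p.1, p.2))
          (fun p => (Tr N (2*N - p.2) p.1, p.2)) ?_ ?_ ?_ ?_ ?_
        · intro p hp
          simp only [Finset.mem_filter, Finset.mem_product, Finset.mem_univ, true_and,
            Finset.mem_Icc] at hp ⊢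
          obtain ⟨⟨hk1, hk2⟩, hEC, hmin⟩ := hp
          have hhalf := (halffill _).mp hEC.1
          exact ⟨⟨hk1, hk2⟩, (forward p.1 hhalf hk1 hk2 hmin).1,
            hEC.2 p.2 (Finset.mem_Icc.mpr ⟨hk1, hk2⟩) hmin⟩
        · intro p hp
          simp only [Finset.mem_filter, Finset.mem_product, Finset.mem_univ, true_and,
            Finset.mem_Icc] at hp ⊢
          obtain ⟨⟨hk1, hk2⟩, hD, hke⟩ := hp
          have hb := backward p.1 hD hk1 hk2 hke
          exact ⟨⟨hk1, hk2⟩, hb.1, hb.2⟩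
        · intro p hp
          simp only [Finset.mem_filter, Finset.mem_product, Finset.mem_univ, true_and,
            Finset.mem_Icc] at hp
          dsimp only
          rw [Tr_Tr (show p.2 + (2*N - p.2) = 2*N from by omega)]
        · intro p hp
          simp only [Finset.mem_filter, Finset.mem_product, Finset.mem_univ, true_and,
            Finset.mem_Icc] at hp
          dsimp only
          rw [Tr_Tr (show (2*N - p.2) + p.2 = 2*N from by omega)]
        · intro p hp
          simp only [Finset.mem_filter, Finset.mem_product, Finset.mem_univ, true_and,
            Finset.mem_Icc] at hp
          obtain ⟨⟨hk1, hk2⟩, hEC, hmin⟩ := hp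
          have hhalf := (halffill _).mp hEC.1
          have fwd := forward p.1 hhalf hk1 hk2 hmin
          rw [fwd.2.1, fwd.2.2]
          rfl
    _ = ∑ g : Fin (2*N) → Bool, ∑ k ∈ Finset.Icc 1 (2*N),
          (if IsDyck (List.ofFn g) ∧ Even k
           then (1 / (dreturns (List.ofFn g) : ℝ)) * q ^ (darea (List.ofFn g)).toNat else 0) := by
        rw [Finset.sum_filter, Finset.sum_product]
    _ = ∑ f : Fin (2 * N) → Bool,
          if IsDyck (List.ofFn f)
          then ((N : ℝ) / dreturns (List.ofFn f)) * q ^ (darea (List.ofFn f)).toNat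
          else 0 := by
        apply Finset.sum_congr rfl
        intro g _
        by_cases hD : IsDyck (List.ofFn g)
        · simp only [hD, true_and, if_pos]
          rw [Finset.sum_ite, Finset.sum_const_zero, add_zero, Finset.sum_const,
            card_even N, nsmul_eq_mul]
          ring
        · simp [hD]

lemma dret_pos {N : ℕ} (hN : 1 ≤ N) (g : Fin (2*N) → Bool) (hD : IsDyck (List.ofFn g)) :
    0 < dreturns (List.ofFn g) := by
  apply Finset.card_pos.mpr
  refine ⟨(List.ofFn g).length, Finset.mem_filter.mpr ⟨?_, hD.2⟩⟩
  rw [Finset.mem_Icc, List.length_ofFn]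
  omega

lemma integral_eval {m : ℕ} (hm : 1 ≤ m) (c : ℝ) :
    (∫ s in (0:ℝ)..1, c * s ^ (m-1)) = c / m := by
  rw [intervalIntegral.integral_const_mul, integral_pow,
    show m - 1 + 1 = m from by omega, one_pow, zero_pow (by omega : m ≠ 0)]
  have hcast : ((m - 1 : ℕ) : ℝ) + 1 = (m : ℝ) := by
    rw [Nat.cast_sub hm]; ring
  rw [hcast]
  ring

open scoped Classical in
lemma part2 (N : ℕ) (hN : 1 ≤ N) (q : ℝ) :
    (∑ f : Fin (2 * N) → Bool,
        if IsDyck (List.ofFn f)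
        then ((N : ℝ) / dreturns (List.ofFn f)) * q ^ (darea (List.ofFn f)).toNat
        else 0)
      = N * ∫ s in (0 : ℝ)..1, Gqs N q s / s := by
  have key : (∫ s in (0:ℝ)..1, Gqs N q s / s)
      = ∑ g : Fin (2*N) → Bool,
          if IsDyck (List.ofFn g)
          then q ^ (darea (List.ofFn g)).toNat * (1 / (dreturns (List.ofFn g) : ℝ))
          else 0 := by
    have e1 : (∫ s in (0:ℝ)..1, Gqs N q s / s)
        = ∫ s in (0:ℝ)..1, ∑ g : Fin (2*N) → Bool,
            (if IsDyck (List.ofFn g)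
             then q ^ (darea (List.ofFn g)).toNat * s ^ (dreturns (List.ofFn g) - 1)
             else 0) := by
      apply intervalIntegral.integral_congr_ae
      apply MeasureTheory.ae_of_all
      intro s hs
      have hs0 : s ≠ 0 := by
        rcases Set.mem_uIoc.mp hs with h | h
        · exact ne_of_gt h.1
        · linarith [h.1, h.2]
      unfold Gqs
      rw [Finset.sum_div]
      apply Finset.sum_congr rfl
      intro g _
      by_cases hD : IsDyck (List.ofFn g)
      · rw [if_pos hD, if_pos hD]
        have hd1 : 1 ≤ dreturns (List.ofFn g) := dret_pos hN g hD
        have hpow : s ^ dreturns (List.ofFn g)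
            = s ^ (dreturns (List.ofFn g) - 1) * s := by
          rw [← pow_succ]
          congr 1
          omega
        rw [hpow, mul_div_assoc, mul_div_cancel_right₀ _ hs0]
      · rw [if_neg hD, if_neg hD, zero_div]
    rw [e1, intervalIntegral.integral_finset_sum]
    · apply Finset.sum_congr rfl
      intro g _
      by_cases hD : IsDyck (List.ofFn g)
      · simp only [hD, if_true]
        rw [integral_eval (dret_pos hN g hD)]
        ring
      · simp [hD]
    · intro g _
      by_cases hD : IsDyck (List.ofFn g)
      · simp only [hD, if_true]
        exact ((continuous_const.mul (continuous_pow _)).intervalIntegrable _ _)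
      · simp only [hD, if_false]
        exact intervalIntegrable_const
  rw [key, Finset.mul_sum]
  apply Finset.sum_congr rfl
  intro g _
  by_cases hD : IsDyck (List.ofFn g)
  · simp only [hD, if_true]
    ring
  · simp [hD]

end ZP

open scoped Classical in
/-- The single-parity partition function satisfies
`Z_N(q) = ∑_{w ∈ D_N} (N/m(w)) q^{a(w)}`, and consequently
`Z_N(q) = N ∫_0^1 G_N(q,s)/s ds`. -/
theorem Zconf_eq_weighted_dyck_sum (N : ℕ) (hN : 1 ≤ N) (q : ℝ) :
    Zconf N q =
        (∑ f : Fin (2 * N) → Bool,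
          if IsDyck (List.ofFn f)
          then ((N : ℝ) / dreturns (List.ofFn f)) * q ^ (darea (List.ofFn f)).toNat
          else 0) ∧
      Zconf N q = N * ∫ s in (0 : ℝ)..1, Gqs N q s / s := by
  refine ⟨ZP.part1 N hN q, ?_⟩
  rw [ZP.part1 N hN q, ZP.part2 N hN q]
end

section
/- At q = 1 the single-parity partition function equals Z_N(1) = (1/2)·binomial(2N, N), i.e. ∑_{w ∈ D_N} N/m(w) = (1/2)·binomial(2N, N) for N ≥ 1. -/
open Finset

namespace ZProof

open scoped Classical
open Fin.NatCast

/-- step value of a letter -/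
def ee (b : Bool) : ℤ := if b then 1 else -1

variable {n : ℕ} [NeZero n]

/-- height after `k` steps, indices read cyclically -/
def H (f : Fin n → Bool) (k : ℕ) : ℤ := ∑ i ∈ Finset.range k, ee (f (i : ℕ))

/-- rotation of a cyclic word by `j` -/
def rot (j : Fin n) (f : Fin n → Bool) : Fin n → Bool := fun i => f (i + j)

lemma npos : 0 < n := Nat.pos_of_ne_zero (NeZero.ne n)

lemma H_n (f : Fin n → Bool) : H f n = ∑ x : Fin n, ee (f x) := by
  rw [H, ← Fin.sum_univ_eq_sum_range (fun i => ee (f (i : ℕ))) n]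
  exact Finset.sum_congr rfl fun x _ => by rw [Fin.cast_val_eq_self]

lemma H_add (f : Fin n → Bool) (a b : ℕ) :
    H f (a + b) = H f a + ∑ i ∈ Finset.range b, ee (f ((a : Fin n) + (i : ℕ))) := by
  rw [H, Finset.sum_range_add]
  congr 1
  exact Finset.sum_congr rfl fun i _ => by push_cast; ring_nf

lemma H_rot (j : Fin n) (f : Fin n → Bool) (k : ℕ) :
    H (rot j f) k = H f (j.val + k) - H f j.val := by
  rw [H_add, Fin.cast_val_eq_self]
  have : ∀ i ∈ Finset.range k, ee (f (j + (i : ℕ))) = ee (rot j f (i : ℕ)) := by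
    intro i _; rw [rot, add_comm]
  rw [Finset.sum_congr rfl this]
  rw [H]; ring

lemma H_period (f : Fin n → Bool) (k : ℕ) : H f (k + n) = H f k + H f n := by
  rw [H_add]
  congr 1
  rw [← Fin.sum_univ_eq_sum_range (fun i => ee (f ((k : Fin n) + (i : ℕ)))) n]
  rw [H_n]
  have h1 : ∀ x : Fin n, ee (f ((k : Fin n) + ((x.val : ℕ) : Fin n))) = ee (f ((k : Fin n) + x)) := by
    intro x; rw [Fin.cast_val_eq_self]
  rw [Finset.sum_congr rfl (fun x _ => h1 x)]
  exact Equiv.sum_comp (Equiv.addLeft (k : Fin n)) (fun x => ee (f x))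

lemma H_periodic (f : Fin n → Bool) (hf : H f n = 0) : Function.Periodic (H f) n :=
  fun k => by rw [H_period, hf, add_zero]

lemma H_mod (f : Fin n → Bool) (hf : H f n = 0) (k : ℕ) : H f (k % n) = H f k :=
  (H_periodic f hf).map_mod_nat k

lemma H_congr_mod (f : Fin n → Bool) (hf : H f n = 0) {a b : ℕ} (h : a % n = b % n) :
    H f a = H f b := by rw [← H_mod f hf a, ← H_mod f hf b, h]

lemma dheight_ofFn (f : Fin n → Bool) (k : ℕ) (hk : k ≤ n) :
    dheight (List.ofFn f) k = H f k := by
  induction k with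
  | zero => simp [dheight, H]
  | succ k ih =>
    have hk' : k < n := hk
    have hlen : k < (List.ofFn f).length := by rw [List.length_ofFn]; exact hk'
    have h3 : H f (k + 1) = H f k + ee (f ((k : ℕ) : Fin n)) := Finset.sum_range_succ _ k
    have h2 : ((k : ℕ) : Fin n) = ⟨k, hk'⟩ := by
      apply Fin.ext; simp [Fin.val_cast_of_lt hk']
    rw [dheight, List.take_succ, List.map_append, List.sum_append,
      List.getElem?_eq_getElem hlen, List.getElem_ofFn, h3, ← ih (le_of_lt hk'), h2]
    simp [dheight, ee]

lemma isDyck_ofFn_iff (f : Fin n → Bool) :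
    IsDyck (List.ofFn f) ↔ (∀ k ≤ n, 0 ≤ H f k) ∧ H f n = 0 := by
  rw [IsDyck, List.length_ofFn]
  constructor
  · rintro ⟨h1, h2⟩
    refine ⟨fun k hk => ?_, ?_⟩
    · rw [← dheight_ofFn f k hk]
      exact h1 k (Finset.mem_range.mpr (Nat.lt_succ_of_le hk))
    · rw [← dheight_ofFn f n le_rfl]; exact h2
  · rintro ⟨h1, h2⟩
    refine ⟨fun k hk => ?_, ?_⟩
    · have hk' : k ≤ n := Nat.lt_succ_iff.mp (Finset.mem_range.mp hk)
      rw [dheight_ofFn f k hk']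
      exact h1 k hk'
    · rw [dheight_ofFn f n le_rfl]; exact h2

lemma dreturns_ofFn (f : Fin n → Bool) :
    dreturns (List.ofFn f) = ((Finset.Icc 1 n).filter (fun k => H f k = 0)).card := by
  rw [dreturns, List.length_ofFn]
  congr 1
  apply Finset.filter_congr
  intro k hk
  rw [dheight_ofFn f k (Finset.mem_Icc.mp hk).2]

/-- `j` is a position of cyclic minimum -/
def minAt (f : Fin n → Bool) (j : Fin n) : Prop := ∀ k : ℕ, H f j.val ≤ H f k

/-- set of minimum positions in `[0, n)` -/
noncomputable def MinSet (f : Fin n → Bool) : Finset ℕ :=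
  (Finset.range n).filter (fun i => ∀ k : ℕ, H f i ≤ H f k)

lemma minSet_nonempty (f : Fin n → Bool) (hf : H f n = 0) : (MinSet f).Nonempty := by
  obtain ⟨i, hi, hmin⟩ := Finset.exists_min_image (Finset.range n) (H f)
    ⟨0, Finset.mem_range.mpr npos⟩
  refine ⟨i, Finset.mem_filter.mpr ⟨hi, fun k => ?_⟩⟩
  rw [← H_mod f hf k]
  exact hmin _ (Finset.mem_range.mpr (Nat.mod_lt _ npos))

lemma isDyck_rot_iff (f : Fin n → Bool) (j : Fin n) :
    IsDyck (List.ofFn (rot j f)) ↔ (H f n = 0 ∧ minAt f j) := by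
  rw [isDyck_ofFn_iff]
  have hbal : H (rot j f) n = H f n := by
    rw [H_rot, H_period]; ring
  constructor
  · rintro ⟨h1, h2⟩
    rw [hbal] at h2
    refine ⟨h2, fun k => ?_⟩
    set k' := (k + n - j.val) % n with hk'
    have hk'n : k' ≤ n := le_of_lt (Nat.mod_lt _ npos)
    have h3 := h1 k' hk'n
    rw [H_rot] at h3
    have h4 : H f j.val ≤ H f (j.val + k') := by linarith
    have h5 : H f (j.val + k') = H f k := by
      apply H_congr_mod f h2
      have e1 : (j.val + k') % n = (j.val + (k + n - j.val)) % n := by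
        rw [hk', Nat.add_mod, Nat.mod_mod_of_dvd _ dvd_rfl, ← Nat.add_mod]
      have e2 : j.val + (k + n - j.val) = k + n := by
        have : j.val ≤ k + n := le_of_lt (lt_of_lt_of_le j.isLt (Nat.le_add_left n k))
        omega
      rw [e1, e2, Nat.add_mod_right]
    rw [h5] at h4; exact h4
  · rintro ⟨h2, hmin⟩
    refine ⟨fun k _ => ?_, by rw [hbal]; exact h2⟩
    rw [H_rot]
    have := hmin (j.val + k)
    linarith

lemma dreturns_rot (f : Fin n → Bool) (j : Fin n) (hf : H f n = 0) (hj : minAt f j) :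
    dreturns (List.ofFn (rot j f)) = (MinSet f).card := by
  rw [dreturns_ofFn]
  have hcond : ∀ k, (H (rot j f) k = 0) ↔ (H f (j.val + k) = H f j.val) := by
    intro k; rw [H_rot, sub_eq_zero]
  have hfil : (Finset.Icc 1 n).filter (fun k => H (rot j f) k = 0)
      = (Finset.Icc 1 n).filter (fun k => H f (j.val + k) = H f j.val) := by
    apply Finset.filter_congr; intro k _; simp [hcond k]
  rw [hfil]
  set v := j.val with hv
  have hvn : v < n := j.isLt
  apply Finset.card_nbij' (fun k => (v + k) % n)
    (fun i => if v < i then i - v else i + n - v)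
  · intro k hk
    obtain ⟨hk1, hk2⟩ := Finset.mem_Icc.mp (Finset.mem_filter.mp hk).1
    have hcondk := (Finset.mem_filter.mp hk).2
    refine Finset.mem_filter.mpr ⟨Finset.mem_range.mpr (Nat.mod_lt _ npos), fun k' => ?_⟩
    have e1 : H f ((v + k) % n) = H f (v + k) := H_mod f hf _
    rw [e1, hcondk]
    exact hj k'
  · intro i hi
    obtain ⟨hirange, himin⟩ := Finset.mem_filter.mp hi
    have hin : i < n := Finset.mem_range.mp hirange
    have hHi : H f i = H f v := le_antisymm (himin v) (hj i)
    by_cases hcase : v < i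
    · simp only [if_pos hcase]
      refine Finset.mem_filter.mpr ⟨Finset.mem_Icc.mpr ⟨by omega, by omega⟩, ?_⟩
      have : v + (i - v) = i := by omega
      rw [this, hHi]
    · simp only [if_neg hcase]
      refine Finset.mem_filter.mpr ⟨Finset.mem_Icc.mpr ⟨by omega, by omega⟩, ?_⟩
      have : v + (i + n - v) = i + n := by omega
      rw [this, H_period, hf, add_zero, hHi]
  · intro k hk
    obtain ⟨hk1, hk2⟩ := Finset.mem_Icc.mp (Finset.mem_filter.mp hk).1
    dsimp only
    by_cases hcase : v + k < n
    · rw [Nat.mod_eq_of_lt hcase]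
      have : v < v + k := by omega
      rw [if_pos this]; omega
    · have h1 : (v + k) % n = v + k - n := by
        rw [Nat.mod_eq_sub_mod (by omega), Nat.mod_eq_of_lt (by omega)]
      rw [h1]
      have : ¬ (v < v + k - n) := by omega
      rw [if_neg this]; omega
  · intro i hi
    have hin : i < n := Finset.mem_range.mp (Finset.mem_filter.mp hi).1
    dsimp only
    by_cases hcase : v < i
    · rw [if_pos hcase]
      have : v + (i - v) = i := by omega
      rw [this, Nat.mod_eq_of_lt hin]
    · rw [if_neg hcase]
      have : v + (i + n - v) = i + n := by omega
      rw [this, Nat.add_mod_right, Nat.mod_eq_of_lt hin]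

lemma card_minAt (f : Fin n → Bool) :
    ((Finset.univ : Finset (Fin n)).filter (fun j => minAt f j)).card = (MinSet f).card := by
  refine Finset.card_nbij' (fun j => j.val) (fun i => ((i : ℕ) : Fin n)) ?_ ?_ ?_ ?_
  · intro j hj
    have hmin := (Finset.mem_filter.mp hj).2
    exact Finset.mem_filter.mpr ⟨Finset.mem_range.mpr j.isLt, hmin⟩
  · intro i hi
    obtain ⟨hirange, himin⟩ := Finset.mem_filter.mp hi
    have hin : i < n := Finset.mem_range.mp hirange
    refine Finset.mem_filter.mpr ⟨Finset.mem_univ _, ?_⟩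
    intro k
    rw [Fin.val_cast_of_lt hin]
    exact himin k
  · intro j _; exact Fin.cast_val_eq_self j
  · intro i hi
    exact Fin.val_cast_of_lt (Finset.mem_range.mp (Finset.mem_filter.mp hi).1)

lemma sum_rot_j (f : Fin n → Bool) :
    (∑ j : Fin n, if IsDyck (List.ofFn (rot j f))
        then (1 : ℝ) / dreturns (List.ofFn (rot j f)) else 0)
      = if H f n = 0 then 1 else 0 := by
  by_cases hf : H f n = 0
  · rw [if_pos hf]
    have hterm : ∀ j : Fin n,
        (if IsDyck (List.ofFn (rot j f))
          then (1 : ℝ) / dreturns (List.ofFn (rot j f)) else 0)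
        = (if minAt f j then (1 : ℝ) / (MinSet f).card else 0) := by
      intro j
      by_cases hj : minAt f j
      · rw [if_pos hj, if_pos ((isDyck_rot_iff f j).mpr ⟨hf, hj⟩),
          dreturns_rot f j hf hj]
      · rw [if_neg hj, if_neg (fun h => hj ((isDyck_rot_iff f j).mp h).2)]
    rw [Finset.sum_congr rfl (fun j _ => hterm j)]
    rw [← Finset.sum_filter, Finset.sum_const, card_minAt]
    have hM : (MinSet f).card ≠ 0 := Finset.card_ne_zero_of_mem (minSet_nonempty f hf).choose_spec
    rw [nsmul_eq_mul]
    field_simp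
  · rw [if_neg hf]
    apply Finset.sum_eq_zero
    intro j _
    rw [if_neg (fun h => hf ((isDyck_rot_iff f j).mp h).1)]

lemma sum_rot_f (j : Fin n) :
    (∑ f : Fin n → Bool, if IsDyck (List.ofFn (rot j f))
        then (1 : ℝ) / dreturns (List.ofFn (rot j f)) else 0)
      = ∑ f : Fin n → Bool, if IsDyck (List.ofFn f)
          then (1 : ℝ) / dreturns (List.ofFn f) else 0 := by
  have E : (Fin n → Bool) ≃ (Fin n → Bool) :=
    Equiv.arrowCongr (Equiv.addRight j) (Equiv.refl Bool)
  have hE : ∀ f, rot j f = (Equiv.arrowCongr (Equiv.addRight j) (Equiv.refl Bool)).symm f := by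
    intro f; funext i
    simp [rot, Equiv.arrowCongr]
  refine Fintype.sum_equiv ((Equiv.arrowCongr (Equiv.addRight j) (Equiv.refl Bool)).symm)
    _ _ (fun f => ?_)
  rw [hE f]

lemma H_n_trues (f : Fin n → Bool) :
    H f n = 2 * ((Finset.univ.filter (fun i => f i = true)).card : ℤ) - n := by
  rw [H_n]
  rw [← Finset.sum_filter_add_sum_filter_not Finset.univ (fun x => f x = true)]
  have h1 : ∀ x ∈ Finset.univ.filter (fun x => f x = true), ee (f x) = 1 := by
    intro x hx; rw [ee, if_pos (Finset.mem_filter.mp hx).2]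
  have h2 : ∀ x ∈ Finset.univ.filter (fun x => ¬ f x = true), ee (f x) = -1 := by
    intro x hx
    rw [ee, if_neg]
    exact (Finset.mem_filter.mp hx).2
  rw [Finset.sum_congr rfl h1, Finset.sum_congr rfl h2, Finset.sum_const, Finset.sum_const]
  have hcard := Finset.card_filter_add_card_filter_not
    (s := (Finset.univ : Finset (Fin n))) (p := fun x => f x = true)
  simp only [Finset.card_univ, Fintype.card_fin] at hcard
  simp only [nsmul_eq_mul, mul_one, mul_neg_one]
  omega

lemma card_balanced {N : ℕ} (hn : n = 2 * N) :
    ((Finset.univ : Finset (Fin n → Bool)).filter (fun f => H f n = 0)).card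
      = n.choose N := by
  subst hn
  have hfil : (Finset.univ : Finset (Fin (2 * N) → Bool)).filter
        (fun f => H f (2 * N) = 0)
      = (Finset.univ : Finset (Fin (2 * N) → Bool)).filter
        (fun f => (Finset.univ.filter (fun i => f i = true)).card = N) := by
    apply Finset.filter_congr
    intro f _
    rw [H_n_trues]
    constructor
    · intro h
      have hle : (Finset.univ.filter (fun i => f i = true)).card ≤ 2 * N := by
        calc _ ≤ (Finset.univ : Finset (Fin (2*N))).card := Finset.card_filter_le _ _
          _ = 2 * N := by simp
      omega
    · intro h; rw [h]; push_cast; ring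
  have hpow : (2 * N).choose N
      = (Finset.powersetCard N (Finset.univ : Finset (Fin (2 * N)))).card := by
    rw [Finset.card_powersetCard]; simp
  rw [hfil, hpow]
  apply Finset.card_bij (fun f _ => Finset.univ.filter (fun i => f i = true))
  · intro f hf
    rw [Finset.mem_powersetCard]
    exact ⟨Finset.filter_subset _ _ |>.trans (by simp), (Finset.mem_filter.mp hf).2⟩
  · intro f hf g hg hfg
    funext i
    have h1 : f i = true ↔ g i = true := by
      constructor
      · intro h
        have : i ∈ Finset.univ.filter (fun i => f i = true) := by simp [h]
        rw [hfg] at this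
        exact (Finset.mem_filter.mp this).2
      · intro h
        have : i ∈ Finset.univ.filter (fun i => g i = true) := by simp [h]
        rw [← hfg] at this
        exact (Finset.mem_filter.mp this).2
    cases hf' : f i <;> cases hg' : g i <;> simp_all
  · intro s hs
    rw [Finset.mem_powersetCard] at hs
    refine ⟨fun i => decide (i ∈ s), ?_, ?_⟩
    · apply Finset.mem_filter.mpr
      refine ⟨Finset.mem_univ _, ?_⟩
      have hset : (Finset.univ.filter (fun i => (fun i => decide (i ∈ s)) i = true)) = s := by
        ext i; simp
      rw [hset, hs.2]
    · ext i
      simp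

end ZProof

open ZProof in
open scoped Classical in
/-- At `q = 1` the single-parity partition function equals half the central
binomial coefficient: `∑_{w ∈ D_N} N/m(w) = (1/2)·C(2N,N)` for `N ≥ 1`. -/
theorem Z_at_one (N : ℕ) (hN : 1 ≤ N) :
    (∑ f : Fin (2 * N) → Bool,
        if IsDyck (List.ofFn f) then (N : ℝ) / dreturns (List.ofFn f) else 0)
      = (1 / 2) * ((2 * N).choose N : ℝ) := by
  haveI : NeZero (2 * N) := ⟨by omega⟩
  set T : ℝ := ∑ f : Fin (2 * N) → Bool,
      if IsDyck (List.ofFn f) then (1 : ℝ) / dreturns (List.ofFn f) else 0 with hT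
  have hLHS : (∑ f : Fin (2 * N) → Bool,
        if IsDyck (List.ofFn f) then (N : ℝ) / dreturns (List.ofFn f) else 0)
      = N * T := by
    rw [hT, Finset.mul_sum]
    refine Finset.sum_congr rfl fun f _ => ?_
    by_cases h : IsDyck (List.ofFn f)
    · rw [if_pos h, if_pos h]
      field_simp
    · rw [if_neg h, if_neg h, mul_zero]
  have hnT : (2 * N : ℝ) * T = ((2 * N).choose N : ℝ) := by
    have hdouble : ∑ j : Fin (2 * N), ∑ f : Fin (2 * N) → Bool,
          (if IsDyck (List.ofFn (rot j f))
            then (1 : ℝ) / dreturns (List.ofFn (rot j f)) else 0)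
        = ∑ f : Fin (2 * N) → Bool, ∑ j : Fin (2 * N),
          (if IsDyck (List.ofFn (rot j f))
            then (1 : ℝ) / dreturns (List.ofFn (rot j f)) else 0) :=
      Finset.sum_comm
    have hleft : ∑ j : Fin (2 * N), ∑ f : Fin (2 * N) → Bool,
          (if IsDyck (List.ofFn (rot j f))
            then (1 : ℝ) / dreturns (List.ofFn (rot j f)) else 0)
        = (2 * N : ℝ) * T := by
      rw [Finset.sum_congr rfl (fun j _ => sum_rot_f j), Finset.sum_const,
        Finset.card_univ, Fintype.card_fin, nsmul_eq_mul]
      norm_cast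
    have hright : ∑ f : Fin (2 * N) → Bool, ∑ j : Fin (2 * N),
          (if IsDyck (List.ofFn (rot j f))
            then (1 : ℝ) / dreturns (List.ofFn (rot j f)) else 0)
        = ((2 * N).choose N : ℝ) := by
      rw [Finset.sum_congr rfl (fun f _ => sum_rot_j f)]
      rw [Finset.sum_boole]
      rw [card_balanced rfl]
    rw [← hleft, hdouble, hright]
  rw [hLHS]
  have h2 : (2 : ℝ) * ((N : ℝ) * T) = ((2 * N).choose N : ℝ) := by
    rw [← hnT]; ring
  linarith

-- check
end

section
/- In the half-filled locally constrained exclusion process on a ring (jump 010 → 001 with rate q and 001 → 010 with rate 1, allowed only if the site preceding the moving particle is empty), the minimum value of the height function h_k = ∑_{i≤k}(1 − 2η_i) is invariant under every allowed transition, and all sites where the height attains its minimum have the same parity, which is also preserved by the dynamics. -/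
open Finset

/-- An allowed transition of the constrained exclusion process at the bond
`(k, k+1)`: the preceding site `k−1` is empty, and the particle/hole pair at
sites `k, k+1` is exchanged (forward move `010 → 001` if the particle sits at
`k`, backward move `001 → 010` if it sits at `k+1`). -/
def MoveAt (L : ℕ) (η η' : ℕ → Bool) (k : ℕ) : Prop :=
  1 ≤ k ∧ k + 2 ≤ L ∧ η (k - 1) = false ∧
    ((η k = true ∧ η (k + 1) = false) ∨ (η k = false ∧ η (k + 1) = true)) ∧
    η' k = η (k + 1) ∧ η' (k + 1) = η k ∧
    ∀ j, j ≠ k → j ≠ k + 1 → η' j = η j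

lemma cheight_succ (η : ℕ → Bool) (n : ℕ) :
    cheight η (n + 1) = cheight η n + (if η n then (-1 : ℤ) else 1) :=
  Finset.sum_range_succ _ n

lemma cheight_mod (η : ℕ → Bool) (n : ℕ) : cheight η n % 2 = (n : ℤ) % 2 := by
  induction n with
  | zero => simp [cheight]
  | succ n ih =>
    rw [cheight_succ]
    cases h : η n <;> simp only [if_pos, if_neg, Bool.false_eq_true,
      Bool.true_eq_false, ite_true, ite_false] <;> push_cast <;> omega

lemma cheight_congr {η η' : ℕ → Bool} {n : ℕ} (h : ∀ i < n, η' i = η i) :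
    cheight η' n = cheight η n := by
  unfold cheight
  apply Finset.sum_congr rfl
  intro i hi
  rw [h i (Finset.mem_range.mp hi)]

lemma move_symm {L k : ℕ} {η η' : ℕ → Bool} (hm : MoveAt L η η' k) :
    MoveAt L η' η k := by
  obtain ⟨hk1, hkL, hprev, hpair, h'k, h'k1, hrest⟩ := hm
  refine ⟨hk1, hkL, ?_, ?_, h'k1.symm, h'k.symm, fun j h1 h2 => (hrest j h1 h2).symm⟩
  · rw [hrest (k - 1) (by omega) (by omega)]; exact hprev
  · rcases hpair with ⟨hA, hB⟩ | ⟨hA, hB⟩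
    · exact Or.inr ⟨by rw [h'k, hB], by rw [h'k1, hA]⟩
    · exact Or.inl ⟨by rw [h'k, hB], by rw [h'k1, hA]⟩

lemma cheight_move_eq {L k : ℕ} {η η' : ℕ → Bool} (hm : MoveAt L η η' k) :
    ∀ j, j ≠ k + 1 → cheight η' j = cheight η j := by
  obtain ⟨hk1, hkL, hprev, hpair, h'k, h'k1, hrest⟩ := hm
  intro j hj
  induction j with
  | zero => simp [cheight]
  | succ n ih =>
    rcases lt_trichotomy (n + 1) (k + 1) with h | h | h
    · exact cheight_congr (fun i hi => hrest i (by omega) (by omega))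
    · exact absurd h hj
    · rcases eq_or_lt_of_le (Nat.succ_le_of_lt h) with h2 | h2
      · -- n + 1 = k + 2, i.e. n = k + 1
        have hn : n = k + 1 := by omega
        subst hn
        have hck : cheight η' k = cheight η k :=
          cheight_congr (fun i hi => hrest i (by omega) (by omega))
        rw [cheight_succ, cheight_succ, cheight_succ, cheight_succ, hck,
          h'k, h'k1]
        ring
      · rw [cheight_succ, cheight_succ, ih (by omega),
          hrest n (by omega) (by omega)]

lemma chmin_le_of_move {L k : ℕ} {η η' : ℕ → Bool} (hm : MoveAt L η η' k) :
    chmin L η ≤ chmin L η' := by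
  have hm' := hm
  obtain ⟨hk1, hkL, hprev, hpair, h'k, h'k1, hrest⟩ := hm'
  apply Finset.le_min'
  intro y hy
  simp only [Finset.mem_image, Finset.mem_range] at hy
  obtain ⟨j, hj, rfl⟩ := hy
  by_cases hjk : j = k + 1
  · subst hjk
    have hck : cheight η' k = cheight η k :=
      cheight_congr (fun i hi => hrest i (by omega) (by omega))
    have hmem_k : chmin L η ≤ cheight η k :=
      Finset.min'_le _ _ (Finset.mem_image.mpr
        ⟨k, Finset.mem_range.mpr (by omega), rfl⟩)
    rcases hpair with ⟨hA, hB⟩ | ⟨hA, hB⟩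
    · -- forward: new value at k+1 is cheight η k + 1
      have hv : cheight η' (k + 1) = cheight η k + 1 := by
        rw [cheight_succ, hck, h'k, hB]; simp
      rw [hv]; omega
    · -- backward: new value at k+1 is cheight η k - 1 = cheight η (k-1)
      have hke : k - 1 + 1 = k := by omega
      have hkm : cheight η k = cheight η (k - 1) + 1 := by
        conv_lhs => rw [← hke]
        rw [cheight_succ, hprev]; simp
      have hv : cheight η' (k + 1) = cheight η (k - 1) := by
        rw [cheight_succ, hck, h'k, hB, hkm]; simp
      have hmem : chmin L η ≤ cheight η (k - 1) :=
        Finset.min'_le _ _ (Finset.mem_image.mpr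
          ⟨k - 1, Finset.mem_range.mpr (by omega), rfl⟩)
      rw [hv]; exact hmem
  · rw [cheight_move_eq hm j hjk]
    exact Finset.min'_le _ _ (Finset.mem_image.mpr
      ⟨j, Finset.mem_range.mpr hj, rfl⟩)

/-- In the half-filled constrained exclusion process on a ring of `2N` sites,
every allowed transition preserves the minimum of the height function; all
minimum sites share the same parity, and this parity is preserved by the
dynamics. -/
theorem min_height_invariant (N : ℕ) (η η' : ℕ → Bool) (k : ℕ)
    (hhalf : (∑ i ∈ Finset.range (2 * N), (if η i then 1 else 0)) = N)
    (hmove : MoveAt (2 * N) η η' k) :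
    chmin (2 * N) η' = chmin (2 * N) η ∧
      (∀ a ∈ Finset.range (2 * N + 1), ∀ b ∈ Finset.range (2 * N + 1),
        cheight η a = chmin (2 * N) η → cheight η b = chmin (2 * N) η →
          (Even a ↔ Even b)) ∧
      (∀ a ∈ Finset.range (2 * N + 1), ∀ b ∈ Finset.range (2 * N + 1),
        cheight η a = chmin (2 * N) η → cheight η' b = chmin (2 * N) η' →
          (Even a ↔ Even b)) := by
  have hmin : chmin (2 * N) η' = chmin (2 * N) η :=
    le_antisymm (chmin_le_of_move (move_symm hmove)) (chmin_le_of_move hmove)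
  refine ⟨hmin, ?_, ?_⟩
  · intro a _ b _ ha hb
    have h1 := cheight_mod η a
    have h2 := cheight_mod η b
    rw [ha] at h1; rw [hb] at h2
    rw [Nat.even_iff, Nat.even_iff]; omega
  · intro a _ b _ ha hb
    have h1 := cheight_mod η a
    have h2 := cheight_mod η' b
    rw [ha] at h1; rw [hb, hmin] at h2
    rw [Nat.even_iff, Nat.even_iff]; omega
end
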